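/- arXiv:2201.11087 — 8 statements merged into one kernel-verified Lean document; each statement's English description precedes it below -/
import Mathlib

section
/- For every Rényi index γ with 0 < γ ≤ 2, the entropy function η_γ is concave on the unit interval [0,1]. -/
/-- The Rényi entropy function `η_γ : ℝ → ℝ`. It vanishes outside the open unit
interval; for `t ∈ (0,1)` it equals `(1/(1-γ))·ln(t^γ + (1-t)^γ)` when `γ ≠ 1`
and `-t·ln t - (1-t)·ln(1-t)` when `γ = 1`. Powers are real powers. -/
noncomputable def renyiEntropy (γ : ℝ) (t : ℝ) : ℝ :=
  if t ∈ Set.Ioo (0 : ℝ) 1 then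
    if γ = 1 then -t * Real.log t - (1 - t) * Real.log (1 - t)
    else (1 / (1 - γ)) * Real.log (t ^ γ + (1 - t) ^ γ)
  else 0

private lemma ConcaveOn.congr' {s : Set ℝ} {f g : ℝ → ℝ} (h : ConcaveOn ℝ s f)
    (he : Set.EqOn f g s) : ConcaveOn ℝ s g := by
  refine ⟨h.1, fun x hx y hy a b ha hb hab => ?_⟩
  rw [← he hx, ← he hy, ← he (h.1 hx hy ha hb hab)]
  exact h.2 hx hy ha hb hab

/-- derivative of `x^p + (1-x)^p` -/
private lemma hasDerivAt_aux_add (p : ℝ) {t : ℝ} (ht0 : t ≠ 0) (ht1 : t ≠ 1) :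
    HasDerivAt (fun x : ℝ => x ^ p + (1 - x) ^ p)
      (p * (t ^ (p - 1) - (1 - t) ^ (p - 1))) t := by
  have h1 : HasDerivAt (fun x : ℝ => x ^ p) (p * t ^ (p - 1)) t :=
    Real.hasDerivAt_rpow_const (Or.inl ht0)
  have h2 : HasDerivAt (fun x : ℝ => (1 - x) ^ p)
      (p * (1 - t) ^ (p - 1) * (-1)) t := by
    exact (Real.hasDerivAt_rpow_const (p := p)
      (Or.inl (sub_ne_zero.2 fun h => ht1 h.symm))).comp t ((hasDerivAt_id t).const_sub 1)
  have := h1.add h2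
  refine this.congr_deriv ?_
  ring

/-- derivative of `x^p - (1-x)^p` -/
private lemma hasDerivAt_aux_sub (p : ℝ) {t : ℝ} (ht0 : t ≠ 0) (ht1 : t ≠ 1) :
    HasDerivAt (fun x : ℝ => x ^ p - (1 - x) ^ p)
      (p * (t ^ (p - 1) + (1 - t) ^ (p - 1))) t := by
  have h1 : HasDerivAt (fun x : ℝ => x ^ p) (p * t ^ (p - 1)) t :=
    Real.hasDerivAt_rpow_const (Or.inl ht0)
  have h2 : HasDerivAt (fun x : ℝ => (1 - x) ^ p)
      (p * (1 - t) ^ (p - 1) * (-1)) t := by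
    exact (Real.hasDerivAt_rpow_const (p := p)
      (Or.inl (sub_ne_zero.2 fun h => ht1 h.symm))).comp t ((hasDerivAt_id t).const_sub 1)
  have := h1.sub h2
  refine this.congr_deriv ?_
  ring

/-- the purely algebraic key inequality, polynomial form -/
private lemma key_poly {γ a b A B : ℝ} (ha : 0 < a) (hb : 0 < b) (hA : 0 < A) (hB : 0 < B)
    (hγ1 : 1 ≤ γ) (hγ0 : 0 < γ)
    (h1 : A * b ≤ B * b + (γ - 1) * (a - b) * B)
    (h2 : B * a ≤ A * a + (γ - 1) * (b - a) * A) :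
    γ ^ 2 * (A - B) ^ 2 * (a * b) ≤ γ * (γ - 1) * (A * b + B * a) * (A * a + B * b) := by
  nlinarith [mul_le_mul_of_nonneg_left h1 (mul_pos hA ha).le,
    mul_le_mul_of_nonneg_left h2 (mul_pos hB hb).le,
    mul_pos (mul_pos hA hB) (mul_pos ha hb), sq_nonneg (a - b),
    mul_nonneg (mul_pos (mul_pos hA hB) (mul_pos ha hb)).le (sub_nonneg.2 hγ1),
    mul_le_mul_of_nonneg_left (mul_le_mul_of_nonneg_left h1 (mul_pos hA ha).le) hγ0.le,
    mul_le_mul_of_nonneg_left (mul_le_mul_of_nonneg_left h2 (mul_pos hB hb).le) hγ0.le]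

/-- the key inequality with rpow, for `1 < γ ≤ 2` -/
private lemma key_rpow {γ a b : ℝ} (ha : 0 < a) (hb : 0 < b) (hγ1 : 1 < γ) (hγ2 : γ ≤ 2) :
    (γ * (a ^ (γ - 1) - b ^ (γ - 1))) ^ 2 ≤
      γ * ((γ - 1) * (a ^ (γ - 2) + b ^ (γ - 2))) * (a ^ γ + b ^ γ) := by
  set A := a ^ (γ - 1) with hAdef
  set B := b ^ (γ - 1) with hBdef
  have hA : 0 < A := Real.rpow_pos_of_pos ha _
  have hB : 0 < B := Real.rpow_pos_of_pos hb _
  have ea : a ^ γ = A * a := by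
    rw [hAdef, ← Real.rpow_add_one ha.ne']; norm_num
  have eb : b ^ γ = B * b := by
    rw [hBdef, ← Real.rpow_add_one hb.ne']; norm_num
  have ea2 : a ^ (γ - 2) = A / a := by
    rw [hAdef, show γ - 2 = γ - 1 - 1 by ring, Real.rpow_sub ha, Real.rpow_one]
  have eb2 : b ^ (γ - 2) = B / b := by
    rw [hBdef, show γ - 2 = γ - 1 - 1 by ring, Real.rpow_sub hb, Real.rpow_one]
  -- Bernoulli inequalities
  have hber : ∀ x y : ℝ, 0 < x → 0 < y →
      x ^ (γ - 1) * y ≤ y ^ (γ - 1) * y + (γ - 1) * (x - y) * (y ^ (γ - 1)) := by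
    intro x y hx hy
    have hb1 : (1 + (x / y - 1)) ^ (γ - 1) ≤ 1 + (γ - 1) * (x / y - 1) :=
      rpow_one_add_le_one_add_mul_self
        (by have : 0 < x / y := div_pos hx hy; linarith) (by linarith) (by linarith)
    rw [show 1 + (x / y - 1) = x / y by ring, Real.div_rpow hx.le hy.le] at hb1
    have hY : 0 < y ^ (γ - 1) := Real.rpow_pos_of_pos hy _
    rw [div_le_iff₀ hY] at hb1
    have := mul_le_mul_of_nonneg_right hb1 hy.le
    calc x ^ (γ - 1) * y ≤ (1 + (γ - 1) * (x / y - 1)) * y ^ (γ - 1) * y := this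
      _ = y ^ (γ - 1) * y + (γ - 1) * (x - y) * (y ^ (γ - 1)) := by
          field_simp
  have h1 : A * b ≤ B * b + (γ - 1) * (a - b) * B := hber a b ha hb
  have h2 : B * a ≤ A * a + (γ - 1) * (b - a) * A := hber b a hb ha
  have hkey := key_poly ha hb hA hB hγ1.le (by linarith) h1 h2
  rw [ea, eb, ea2, eb2]
  have hab : 0 < a * b := mul_pos ha hb
  have heq : γ * ((γ - 1) * (A / a + B / b)) * (A * a + B * b) =
      γ * (γ - 1) * (A * b + B * a) * (A * a + B * b) / (a * b) := by
    rw [div_add_div _ _ ha.ne' hb.ne']; ring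
  rw [heq, le_div_iff₀ hab]
  nlinarith [hkey]

/-- For every Rényi index `γ` with `0 < γ ≤ 2`, the entropy function `η_γ` is
concave on the unit interval `[0,1]`. -/
theorem renyiEntropy_concaveOn {γ : ℝ} (hγ0 : 0 < γ) (hγ2 : γ ≤ 2) :
    ConcaveOn ℝ (Set.Icc (0 : ℝ) 1) (renyiEntropy γ) := by
  by_cases hγ1 : γ = 1
  · -- γ = 1 : use binEntropy
    subst hγ1
    refine Real.strictConcave_binEntropy.concaveOn.congr' fun t ht => ?_
    by_cases htIoo : t ∈ Set.Ioo (0 : ℝ) 1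
    · rw [renyiEntropy, if_pos htIoo, if_pos rfl, Real.binEntropy,
        Real.log_inv, Real.log_inv]
      ring
    · rcases ht with ⟨ht0, ht1⟩
      have : t = 0 ∨ t = 1 := by
        rcases lt_or_eq_of_le ht0 with h | h
        · right; by_contra h1; exact htIoo ⟨h, lt_of_le_of_ne ht1 h1⟩
        · left; exact h.symm
      rcases this with rfl | rfl <;> simp [renyiEntropy]
  · -- γ ≠ 1
    set c : ℝ := 1 / (1 - γ) with hc
    set g : ℝ → ℝ := fun x => x ^ γ + (1 - x) ^ γ with hgdef
    have hgpos : ∀ t ∈ Set.Icc (0 : ℝ) 1, 0 < g t := by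
      intro t ht
      rcases lt_or_eq_of_le ht.1 with h | h
      · have : 0 < t ^ γ := Real.rpow_pos_of_pos h _
        have : (0:ℝ) ≤ (1 - t) ^ γ := Real.rpow_nonneg (by linarith [ht.2]) _
        simp only [hgdef]; linarith
      · simp [hgdef, ← h, Real.zero_rpow hγ0.ne', Real.one_rpow]
    have hgcont : Continuous g := by
      have h1 : Continuous fun x : ℝ => x ^ γ := Real.continuous_rpow_const hγ0.le
      exact h1.add (h1.comp (continuous_const.sub continuous_id))
    -- renyiEntropy agrees with c * log ∘ g on Icc
    have heq : Set.EqOn (fun t => c * Real.log (g t)) (renyiEntropy γ) (Set.Icc 0 1) := by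
      intro t ht
      by_cases htIoo : t ∈ Set.Ioo (0 : ℝ) 1
      · rw [renyiEntropy, if_pos htIoo, if_neg hγ1]
      · have : t = 0 ∨ t = 1 := by
          rcases lt_or_eq_of_le ht.1 with h | h
          · right; by_contra h1; exact htIoo ⟨h, lt_of_le_of_ne ht.2 h1⟩
          · left; exact h.symm
        rcases this with rfl | rfl <;>
          simp [renyiEntropy, hgdef, Real.zero_rpow hγ0.ne', Real.one_rpow]
    have hcontOn : ContinuousOn (renyiEntropy γ) (Set.Icc 0 1) := by
      refine ContinuousOn.congr ?_ heq.symm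
      exact (continuousOn_const.mul
        (hgcont.continuousOn.log fun t ht => (hgpos t ht).ne'))
    -- derivative data
    have hint : interior (Set.Icc (0:ℝ) 1) = Set.Ioo 0 1 := interior_Icc
    set g1 : ℝ → ℝ := fun x => γ * (x ^ (γ - 1) - (1 - x) ^ (γ - 1)) with hg1def
    set g2 : ℝ → ℝ := fun x => γ * ((γ - 1) * (x ^ (γ - 2) + (1 - x) ^ (γ - 2))) with hg2def
    have hg : ∀ t ∈ Set.Ioo (0:ℝ) 1, HasDerivAt g (g1 t) t := fun t ht =>
      hasDerivAt_aux_add γ ht.1.ne' (ne_of_lt ht.2)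
    have hg1 : ∀ t ∈ Set.Ioo (0:ℝ) 1, HasDerivAt g1 (g2 t) t := by
      intro t ht
      have h := (hasDerivAt_aux_sub (γ - 1) ht.1.ne' (ne_of_lt ht.2)).const_mul γ
      simpa [hg1def, hg2def, show γ - 1 - 1 = γ - 2 by ring] using h
    refine concaveOn_of_hasDerivWithinAt2_nonpos (convex_Icc 0 1) hcontOn
      (f' := fun t => c * (g1 t / g t))
      (f'' := fun t => c * ((g2 t * g t - g1 t * g1 t) / g t ^ 2)) ?_ ?_ ?_
    · intro t ht
      rw [hint] at ht
      have hFd : HasDerivAt (fun x => c * Real.log (g x)) (c * (g1 t / g t)) t :=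
        ((hg t ht).log (hgpos t (Set.Ioo_subset_Icc_self ht)).ne').const_mul c
      have hev : renyiEntropy γ =ᶠ[nhds t] fun x => c * Real.log (g x) := by
        filter_upwards [Ioo_mem_nhds ht.1 ht.2] with y hy
        exact (heq (Set.Ioo_subset_Icc_self hy)).symm ▸ rfl
      exact ((hFd.congr_of_eventuallyEq hev)).hasDerivWithinAt
    · intro t ht
      rw [hint] at ht
      exact (((hg1 t ht).div (hg t ht)
        (hgpos t (Set.Ioo_subset_Icc_self ht)).ne').const_mul c).hasDerivWithinAt
    · intro t ht
      rw [hint] at ht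
      obtain ⟨ht0, ht1⟩ := ht
      have hb0 : (0:ℝ) < 1 - t := by linarith
      rcases lt_or_gt_of_ne hγ1 with hlt | hgt
      · -- γ < 1 : c > 0, numerator ≤ 0
        have hcpos : 0 < c := by rw [hc]; exact div_pos one_pos (by linarith)
        have hnum : g2 t * g t - g1 t * g1 t ≤ 0 := by
          have h2 : g2 t ≤ 0 := by
            have hp1 : (0:ℝ) ≤ t ^ (γ - 2) := Real.rpow_nonneg ht0.le _
            have hp2 : (0:ℝ) ≤ (1 - t) ^ (γ - 2) := Real.rpow_nonneg hb0.le _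
            have hS : (0:ℝ) ≤ t ^ (γ - 2) + (1 - t) ^ (γ - 2) := by linarith
            simp only [hg2def]
            nlinarith [mul_nonneg (by linarith : (0:ℝ) ≤ 1 - γ) (mul_nonneg hγ0.le hS)]
          have hgt0 : 0 ≤ g t := (hgpos t ⟨ht0.le, by linarith⟩).le
          nlinarith [sq_nonneg (g1 t)]
        exact mul_nonpos_of_nonneg_of_nonpos hcpos.le
          (div_nonpos_of_nonpos_of_nonneg hnum (sq_nonneg _))
      · -- 1 < γ ≤ 2 : c < 0, numerator ≥ 0
        have hcneg : c < 0 := by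
          rw [hc]
          apply div_neg_of_pos_of_neg one_pos
          linarith
        have hnum : 0 ≤ g2 t * g t - g1 t * g1 t := by
          have hk := key_rpow ht0 hb0 hgt hγ2
          simp only [hg1def, hg2def, hgdef]
          nlinarith [hk]
        exact mul_nonpos_of_nonpos_of_nonneg hcneg.le
          (div_nonneg hnum (sq_nonneg _))
end

section
/- For every Rényi index γ > 2, the entropy function η_γ is neither concave nor convex on the unit interval [0,1]; i.e., η_γ restricted to [0,1] is not a concave function and not a convex function. -/
lemma renyi_eq {γ t : ℝ} (hγ : γ ≠ 1) (ht : t ∈ Set.Ioo (0:ℝ) 1) :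
    renyiEntropy γ t = (1/(1-γ)) * Real.log (t^γ + (1-t)^γ) := by
  rw [renyiEntropy, if_pos ht, if_neg hγ]

lemma renyi_zero {γ t : ℝ} (ht : t ∉ Set.Ioo (0:ℝ) 1) : renyiEntropy γ t = 0 := by
  rw [renyiEntropy, if_neg ht]

/-- For every Rényi index `γ > 2`, the entropy function `η_γ` is neither concave
nor convex on the unit interval `[0,1]`. -/
theorem renyiEntropy_not_concaveOn_not_convexOn {γ : ℝ} (hγ : 2 < γ) :
    ¬ ConcaveOn ℝ (Set.Icc (0 : ℝ) 1) (renyiEntropy γ) ∧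
      ¬ ConvexOn ℝ (Set.Icc (0 : ℝ) 1) (renyiEntropy γ) := by
  have hγ1 : γ ≠ 1 := by linarith
  have hγneg : 1/(1-γ) < 0 := div_neg_of_pos_of_neg one_pos (by linarith)
  constructor
  · -- not concave
    intro h
    set c : ℝ := (γ * (2:ℝ)^(1-2*γ)/2) ^ ((γ-2)⁻¹) with hc_def
    have hxpos : 0 < γ * (2:ℝ)^(1-2*γ)/2 :=
      div_pos (mul_pos (by linarith) (Real.rpow_pos_of_pos two_pos _)) two_pos
    have hc : 0 < c := Real.rpow_pos_of_pos hxpos _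
    set t : ℝ := min (1/4) c with ht_def
    have ht0 : 0 < t := lt_min (by norm_num) hc
    have ht4 : t ≤ 1/4 := min_le_left _ _
    have ht1 : t < 1 := lt_of_le_of_lt ht4 (by norm_num)
    have hγ2 : (0:ℝ) < γ - 2 := by linarith
    have h12t : (0:ℝ) < 1 - 2*t := by linarith
    have h1t : (0:ℝ) < 1 - t := by linarith
    -- key bound : t^(γ-2) < γ * 2^(1-2γ)
    have hkey : t ^ (γ-2) < γ * (2:ℝ)^(1-2*γ) := by
      have h1 : t ^ (γ-2) ≤ c ^ (γ-2) :=
        Real.rpow_le_rpow ht0.le (min_le_right _ _) hγ2.le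
      have h2 : c ^ (γ-2) = γ * (2:ℝ)^(1-2*γ)/2 := by
        rw [hc_def, ← Real.rpow_mul hxpos.le, inv_mul_cancel₀ hγ2.ne', Real.rpow_one]
      have h3 : 0 < γ * (2:ℝ)^(1-2*γ) :=
        mul_pos (by linarith) (Real.rpow_pos_of_pos two_pos _)
      rw [h2] at h1; linarith
    have ht2 : t ^ (2:ℝ) = t ^ (2:ℕ) := by
      rw [← Real.rpow_natCast t 2]; norm_num
    have ht2pos : (0:ℝ) < t ^ (2:ℕ) := pow_pos ht0 2
    -- Step A : (2t)^γ < γ * 2^(1-γ) * t^2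
    have hA : (2*t)^γ < γ * (2:ℝ)^(1-γ) * t^(2:ℕ) := by
      have hts : t^γ = t^(γ-2) * t^(2:ℕ) := by
        rw [← ht2, ← Real.rpow_add ht0]; norm_num
      have h1 : (2*t)^γ = 2^γ * t^(γ-2) * t^(2:ℕ) := by
        rw [Real.mul_rpow (by norm_num) ht0.le, hts, mul_assoc]
      have hpow : (2:ℝ)^γ * (2:ℝ)^(1-2*γ) = (2:ℝ)^(1-γ) := by
        rw [← Real.rpow_add two_pos]; ring_nf
      rw [h1]
      apply mul_lt_mul_of_pos_right _ ht2pos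
      calc (2:ℝ)^γ * t^(γ-2) < 2^γ * (γ * (2:ℝ)^(1-2*γ)) :=
            mul_lt_mul_of_pos_left hkey (Real.rpow_pos_of_pos two_pos γ)
        _ = γ * (2:ℝ)^(1-γ) := by rw [← hpow]; ring
    -- Step B : 2^(1-γ) ≤ (1-2t)^(γ-1)
    have hB : (2:ℝ)^(1-γ) ≤ (1-2*t)^(γ-1) := by
      have e : (2:ℝ)^(1-γ) = ((1:ℝ)/2)^(γ-1) := by
        rw [one_div, Real.inv_rpow (by norm_num : (0:ℝ) ≤ 2),
          ← Real.rpow_neg (by norm_num : (0:ℝ) ≤ 2), neg_sub]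
      rw [e]
      exact Real.rpow_le_rpow (by norm_num) (by linarith) (by linarith)
    -- Bernoulli step
    have hBern : (1-2*t)^γ + γ * (1-2*t)^(γ-1) * t^(2:ℕ) ≤ ((1-t)^(2:ℕ))^γ := by
      set s : ℝ := t^(2:ℕ)/(1-2*t) with hs_def
      have hs0 : 0 ≤ s := div_nonneg ht2pos.le h12t.le
      have hbern : 1 + γ * s ≤ (1+s)^γ :=
        one_add_mul_self_le_rpow_one_add (by linarith) (by linarith)
      have hprod : (1-t)^(2:ℕ) = (1-2*t) * (1+s) := by
        rw [hs_def, mul_add, mul_div_assoc', mul_comm (1-2*t) (t^(2:ℕ)), mul_div_assoc, div_self h12t.ne']; ring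
      have hsplit : (1-2*t)^γ = (1-2*t)^(γ-1) * (1-2*t) := by
        rw [← Real.rpow_add_one h12t.ne' (γ-1)]; norm_num
      calc (1-2*t)^γ + γ * (1-2*t)^(γ-1) * t^(2:ℕ)
          = (1-2*t)^γ * (1 + γ * s) := by
            rw [hs_def, hsplit]; field_simp
        _ ≤ (1-2*t)^γ * (1+s)^γ :=
            mul_le_mul_of_nonneg_left hbern (Real.rpow_nonneg h12t.le _)
        _ = ((1-t)^(2:ℕ))^γ := by
            rw [hprod, Real.mul_rpow h12t.le (by linarith)]
    -- square identity
    have hsq : ((1-t)^(2:ℕ))^γ = ((1-t)^γ)^(2:ℕ) := by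
      rw [← Real.rpow_natCast ((1-t)^γ) 2, ← Real.rpow_natCast (1-t) 2,
        ← Real.rpow_mul h1t.le, ← Real.rpow_mul h1t.le]
      norm_num; ring_nf
    have hsq2 : ((1-t)^γ)^(2:ℕ) ≤ (t^γ + (1-t)^γ)^(2:ℕ) :=
      pow_le_pow_left₀ (Real.rpow_nonneg h1t.le _)
        (le_add_of_nonneg_left (Real.rpow_nonneg ht0.le _)) 2
    -- combine
    have hmain : (2*t)^γ + (1-2*t)^γ < (t^γ + (1-t)^γ)^(2:ℕ) := by
      have hb' : γ * (2:ℝ)^(1-γ) * t^(2:ℕ) ≤ γ * (1-2*t)^(γ-1) * t^(2:ℕ) := by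
        apply mul_le_mul_of_nonneg_right _ ht2pos.le
        exact mul_le_mul_of_nonneg_left hB (by linarith)
      calc (2*t)^γ + (1-2*t)^γ
          < γ * (2:ℝ)^(1-γ) * t^(2:ℕ) + (1-2*t)^γ := by linarith
        _ ≤ γ * (1-2*t)^(γ-1) * t^(2:ℕ) + (1-2*t)^γ := by linarith
        _ ≤ ((1-t)^(2:ℕ))^γ := by linarith
        _ = ((1-t)^γ)^(2:ℕ) := hsq
        _ ≤ (t^γ + (1-t)^γ)^(2:ℕ) := hsq2
    -- entropy contradiction
    have hf2pos : (0:ℝ) < (2*t)^γ + (1-2*t)^γ :=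
      add_pos (Real.rpow_pos_of_pos (by linarith) _) (Real.rpow_pos_of_pos h12t _)
    have hlog : Real.log ((2*t)^γ + (1-2*t)^γ) < 2 * Real.log (t^γ + (1-t)^γ) := by
      have := Real.log_lt_log hf2pos hmain
      rwa [Real.log_pow, Nat.cast_ofNat] at this
    have hmem_t : t ∈ Set.Ioo (0:ℝ) 1 := ⟨ht0, ht1⟩
    have hmem_2t : (2*t : ℝ) ∈ Set.Ioo (0:ℝ) 1 := ⟨by linarith, by linarith⟩
    have hgt : 2 * renyiEntropy γ t < renyiEntropy γ (2*t) := by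
      rw [renyi_eq hγ1 hmem_2t, renyi_eq hγ1 hmem_t]
      nlinarith [mul_lt_mul_of_neg_left hlog hγneg]
    have h0mem : (0:ℝ) ∈ Set.Icc (0:ℝ) 1 := by norm_num
    have h2tmem : (2*t : ℝ) ∈ Set.Icc (0:ℝ) 1 := ⟨by linarith, by linarith⟩
    have hcc := h.2 h0mem h2tmem (by norm_num : (0:ℝ) ≤ 1/2)
      (by norm_num : (0:ℝ) ≤ 1/2) (by norm_num)
    have e0 : renyiEntropy γ 0 = 0 := renyi_zero (by norm_num)
    have emid : (1/2 : ℝ) • (0:ℝ) + (1/2 : ℝ) • (2*t) = t := by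
      rw [smul_eq_mul, smul_eq_mul]; ring
    rw [emid, e0] at hcc
    simp only [smul_eq_mul, mul_zero, zero_add] at hcc
    linarith
  · -- not convex
    intro h
    have h0 : (0:ℝ) ∈ Set.Icc (0:ℝ) 1 := by norm_num
    have h1 : (1:ℝ) ∈ Set.Icc (0:ℝ) 1 := by norm_num
    have hcv := h.2 h0 h1 (by norm_num : (0:ℝ) ≤ 1/2) (by norm_num : (0:ℝ) ≤ 1/2)
      (by norm_num)
    have e0 : renyiEntropy γ 0 = 0 := renyi_zero (by norm_num)
    have e1 : renyiEntropy γ 1 = 0 := renyi_zero (by norm_num)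
    have emid : (1/2 : ℝ) • (0:ℝ) + (1/2 : ℝ) • (1:ℝ) = 1/2 := by norm_num
    rw [emid, e0, e1] at hcv
    simp only [smul_eq_mul, mul_zero, zero_add] at hcv
    have ehalf : renyiEntropy γ (1/2 : ℝ) = Real.log 2 := by
      rw [renyi_eq hγ1 (by norm_num)]
      have e : ((1:ℝ)/2)^γ + ((1:ℝ)-1/2)^γ = (2:ℝ)^(1-γ) := by
        have e1 : ((1:ℝ)-1/2) = (1:ℝ)/2 := by norm_num
        have e2 : ((1:ℝ)/2)^γ = ((2:ℝ)^γ)⁻¹ := by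
          rw [one_div, Real.inv_rpow (by norm_num : (0:ℝ) ≤ 2)]
        have e3 : (2:ℝ)^(1-γ) = 2 * ((2:ℝ)^γ)⁻¹ := by
          rw [Real.rpow_sub two_pos, Real.rpow_one, div_eq_mul_inv]
        rw [e1, e2, e3]; ring
      rw [e, Real.log_rpow two_pos]
      have hne : (1:ℝ) - γ ≠ 0 := by intro hh; apply hγ1; linarith
      field_simp

    rw [ehalf] at hcv
    have : (0:ℝ) < Real.log 2 := Real.log_pos (by norm_num)
    linarith
end

section
/- For every p ∈ (0,1) and every t ∈ [0,1], the inequality (t(1−t))^{1−p} · (t^{2p} + (1−t)^{2p}) ≤ 2t(1−t) + p holds, where all powers are real powers (rpow). -/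
/-- For every `p ∈ (0,1)` and `t ∈ [0,1]`:
`(t(1−t))^{1−p} · (t^{2p} + (1−t)^{2p}) ≤ 2t(1−t) + p`, with real powers. -/
theorem rpow_young_inequality {p t : ℝ} (hp : p ∈ Set.Ioo (0 : ℝ) 1)
    (ht : t ∈ Set.Icc (0 : ℝ) 1) :
    (t * (1 - t)) ^ (1 - p) * (t ^ (2 * p) + (1 - t) ^ (2 * p)) ≤ 2 * t * (1 - t) + p := by
  obtain ⟨hp0, hp1⟩ := hp
  obtain ⟨ht0, ht1⟩ := ht
  have hs0 : (0:ℝ) ≤ 1 - t := by linarith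
  have key : ∀ a b : ℝ, 0 ≤ a → 0 ≤ b →
      (a * b) ^ (1 - p) * a ^ (2 * p) ≤ p * (a * a) + (1 - p) * (a * b) := by
    intro a b ha hb
    have hab : 0 ≤ a * b := mul_nonneg ha hb
    have hgm := Real.geom_mean_le_arith_mean2_weighted (w₁ := p) (w₂ := 1 - p)
      (p₁ := a * a) (p₂ := a * b) hp0.le (by linarith) (mul_nonneg ha ha) hab (by ring)
    calc (a * b) ^ (1 - p) * a ^ (2 * p) = (a * a) ^ p * (a * b) ^ (1 - p) := by
          rw [Real.rpow_mul ha,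
            show (a:ℝ) ^ (2:ℝ) = a * a by
              rw [show (2:ℝ) = ((2:ℕ):ℝ) by norm_num, Real.rpow_natCast]; ring]
          ring
      _ ≤ p * (a * a) + (1 - p) * (a * b) := hgm
  have h1 := key t (1 - t) ht0 hs0
  have h2 := key (1 - t) t hs0 ht0
  rw [mul_comm (1 - t) t] at h2
  nlinarith [mul_nonneg (mul_nonneg hp0.le ht0) hs0]
end

section
/- Let u, v ∈ ℝ and let f : ℝ → ℝ be Hölder continuous on the interval [min(u,v), max(u,v)], i.e., there exist constants C ≥ 0 and δ ∈ (0,1] with |f(x) − f(y)| ≤ C·|x − y|^δ for all x, y in that interval. Then the function t ↦ (f(t·u + (1−t)·v) − t·f(u) − (1−t)·f(v)) / (t(1−t)) is integrable on (0,1). If moreover f is concave on [min(u,v), max(u,v)], then U(u,v;f) = ∫₀¹ (f(t·u + (1−t)·v) − t·f(u) − (1−t)·f(v)) / (t(1−t)) dt ≥ 0. -/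
open MeasureTheory Set Real

/-- Let `f : ℝ → ℝ` be Hölder continuous on `[min u v, max u v]` (with exponent
`δ ∈ (0,1]` and constant `C ≥ 0`). Then the integrand of the Widom functional
`U(u,v;f)` is integrable on `(0,1)`, and if moreover `f` is concave on
`[min u v, max u v]`, then `U(u,v;f) ≥ 0`. -/
theorem widom_functional_integrable_and_nonneg (u v : ℝ) (f : ℝ → ℝ) (C δ : ℝ)
    (hC : 0 ≤ C) (hδ : δ ∈ Set.Ioc (0 : ℝ) 1)
    (hHolder : ∀ x ∈ Set.Icc (min u v) (max u v), ∀ y ∈ Set.Icc (min u v) (max u v),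
      |f x - f y| ≤ C * |x - y| ^ δ) :
    MeasureTheory.IntegrableOn
      (fun t : ℝ => (f (t * u + (1 - t) * v) - (t * f u + (1 - t) * f v)) / (t * (1 - t)))
      (Set.Ioo 0 1) ∧
    (ConcaveOn ℝ (Set.Icc (min u v) (max u v)) f →
      0 ≤ ∫ t in Set.Ioo (0 : ℝ) 1,
        (f (t * u + (1 - t) * v) - (t * f u + (1 - t) * f v)) / (t * (1 - t))) := by
  obtain ⟨hδ0, hδ1⟩ := hδ
  have hu : u ∈ Set.Icc (min u v) (max u v) := ⟨min_le_left _ _, le_max_left _ _⟩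
  have hv : v ∈ Set.Icc (min u v) (max u v) := ⟨min_le_right _ _, le_max_right _ _⟩
  have hxmem : ∀ t : ℝ, 0 ≤ t → t ≤ 1 →
      t * u + (1 - t) * v ∈ Set.Icc (min u v) (max u v) := by
    intro t ht0 ht1
    have h2 : (0:ℝ) ≤ 1 - t := by linarith
    have h3 : t + (1 - t) = 1 := by ring
    have := (convex_Icc (min u v) (max u v)) hu hv ht0 h2 h3
    simpa [smul_eq_mul] using this
  -- continuity of f on the interval
  have hH : HolderOnWith C.toNNReal δ.toNNReal f (Set.Icc (min u v) (max u v)) := by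
    intro x hx y hy
    have h := hHolder x hx y hy
    have hxy : (0:ℝ) ≤ |x - y| := abs_nonneg _
    calc edist (f x) (f y) = ENNReal.ofReal |f x - f y| := by
          rw [edist_dist, Real.dist_eq]
      _ ≤ ENNReal.ofReal (C * |x - y| ^ δ) := ENNReal.ofReal_le_ofReal h
      _ = (C.toNNReal : ENNReal) * edist x y ^ (δ.toNNReal : ℝ) := by
          rw [edist_dist, Real.dist_eq, Real.coe_toNNReal δ hδ0.le,
            ENNReal.ofReal_rpow_of_nonneg hxy hδ0.le,
            ENNReal.ofReal_mul hC, ENNReal.ofReal_coe_nnreal.symm,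
            Real.coe_toNNReal C hC]
  have hcont : ContinuousOn f (Set.Icc (min u v) (max u v)) :=
    hH.continuousOn (by simpa using hδ0)
  -- continuity of the integrand on Ioo 0 1
  have hgcont : ContinuousOn
      (fun t : ℝ => (f (t * u + (1 - t) * v) - (t * f u + (1 - t) * f v)) / (t * (1 - t)))
      (Set.Ioo 0 1) := by
    apply ContinuousOn.div
    · apply ContinuousOn.sub
      · exact hcont.comp (by fun_prop) (fun t ht => hxmem t ht.1.le ht.2.le)
      · fun_prop
    · fun_prop
    · intro t ht
      have h1 : 0 < t := ht.1
      have h2 : t < 1 := ht.2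
      exact ne_of_gt (mul_pos h1 (by linarith))
  -- pointwise bound
  set K : ℝ := C * |u - v| ^ δ with hK
  have hK0 : 0 ≤ K := by positivity
  have hbound : ∀ t ∈ Set.Ioo (0:ℝ) 1,
      ‖(f (t * u + (1 - t) * v) - (t * f u + (1 - t) * f v)) / (t * (1 - t))‖ ≤
        K * ((1 - t) ^ (δ - 1) + t ^ (δ - 1)) := by
    intro t ht
    obtain ⟨ht0, ht1⟩ := ht
    have ht1' : 0 < 1 - t := by linarith
    set x := t * u + (1 - t) * v with hx
    have hxI := hxmem t ht0.le ht1.le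
    have hA : |f x - f u| ≤ C * ((1 - t) ^ δ * |u - v| ^ δ) := by
      have := hHolder x hxI u hu
      have hxu : x - u = (1 - t) * (v - u) := by rw [hx]; ring
      rwa [hxu, abs_mul, abs_of_pos ht1', Real.mul_rpow ht1'.le (abs_nonneg _),
        abs_sub_comm v u] at this
    have hB : |f x - f v| ≤ C * (t ^ δ * |u - v| ^ δ) := by
      have := hHolder x hxI v hv
      have hxv : x - v = t * (u - v) := by rw [hx]; ring
      rwa [hxv, abs_mul, abs_of_pos ht0, Real.mul_rpow ht0.le (abs_nonneg _)] at this
    have hnum : |f x - (t * f u + (1 - t) * f v)| ≤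
        t * |f x - f u| + (1 - t) * |f x - f v| := by
      have : f x - (t * f u + (1 - t) * f v)
          = t * (f x - f u) + (1 - t) * (f x - f v) := by ring
      rw [this]
      calc |t * (f x - f u) + (1 - t) * (f x - f v)|
          ≤ |t * (f x - f u)| + |(1 - t) * (f x - f v)| := abs_add_le _ _
        _ = t * |f x - f u| + (1 - t) * |f x - f v| := by
            rw [abs_mul, abs_mul, abs_of_pos ht0, abs_of_pos ht1']
    have hden : 0 < t * (1 - t) := by positivity
    rw [norm_div, Real.norm_eq_abs, Real.norm_eq_abs, abs_of_pos hden,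
      div_le_iff₀ hden]
    have key : t * (C * ((1 - t) ^ δ * |u - v| ^ δ)) + (1 - t) * (C * (t ^ δ * |u - v| ^ δ))
        = K * ((1 - t) ^ (δ - 1) + t ^ (δ - 1)) * (t * (1 - t)) := by
      rw [Real.rpow_sub ht1', Real.rpow_sub ht0, Real.rpow_one, hK]
      field_simp
      simp only [Real.rpow_one, pow_one]
      ring
    calc |f x - (t * f u + (1 - t) * f v)|
        ≤ t * |f x - f u| + (1 - t) * |f x - f v| := hnum
      _ ≤ t * (C * ((1 - t) ^ δ * |u - v| ^ δ)) + (1 - t) * (C * (t ^ δ * |u - v| ^ δ)) := by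
          gcongr
      _ = K * ((1 - t) ^ (δ - 1) + t ^ (δ - 1)) * (t * (1 - t)) := key
  -- integrability of dominating function
  have h1 : IntegrableOn (fun t : ℝ => t ^ (δ - 1)) (Set.Ioo (0:ℝ) 1) := by
    have := intervalIntegral.intervalIntegrable_rpow' (a := 0) (b := 1)
      (r := δ - 1) (by linarith)
    rw [intervalIntegrable_iff] at this
    refine this.mono_set ?_
    rw [Set.uIoc_of_le (by norm_num : (0:ℝ) ≤ 1)]
    exact Set.Ioo_subset_Ioc_self
  have h2 : IntegrableOn (fun t : ℝ => (1 - t) ^ (δ - 1)) (Set.Ioo (0:ℝ) 1) := by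
    have := (intervalIntegral.intervalIntegrable_rpow' (a := 0) (b := 1)
      (r := δ - 1) (by linarith)).comp_sub_left 1
    simp only [sub_zero, sub_self] at this
    replace this := this.symm
    rw [intervalIntegrable_iff] at this
    refine this.mono_set ?_
    rw [Set.uIoc_of_le (by norm_num : (0:ℝ) ≤ 1)]
    exact Set.Ioo_subset_Ioc_self
  have hdom : IntegrableOn
      (fun t : ℝ => K * ((1 - t) ^ (δ - 1) + t ^ (δ - 1))) (Set.Ioo (0:ℝ) 1) :=
    (h2.add h1).const_mul K
  have hmeas : AEStronglyMeasurable
      (fun t : ℝ => (f (t * u + (1 - t) * v) - (t * f u + (1 - t) * f v)) / (t * (1 - t)))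
      (volume.restrict (Set.Ioo (0:ℝ) 1)) :=
    hgcont.aestronglyMeasurable measurableSet_Ioo
  have hint : IntegrableOn
      (fun t : ℝ => (f (t * u + (1 - t) * v) - (t * f u + (1 - t) * f v)) / (t * (1 - t)))
      (Set.Ioo 0 1) := by
    refine hdom.mono' hmeas ?_
    filter_upwards [ae_restrict_mem measurableSet_Ioo] with t ht
    exact hbound t ht
  refine ⟨hint, ?_⟩
  intro hconc
  apply MeasureTheory.setIntegral_nonneg measurableSet_Ioo
  intro t ht
  have ht0 : (0:ℝ) < t := ht.1
  have ht1 : t < 1 := ht.2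
  have := hconc.2 hu hv ht0.le (by linarith : (0:ℝ) ≤ 1 - t) (by ring)
  simp only [smul_eq_mul] at this
  have hden : 0 < t * (1 - t) := mul_pos ht0 (by linarith)
  apply div_nonneg _ hden.le
  linarith
end

section
/- For all real numbers a > 0 and b > 0, the integral identity U(a,b;ln) = ∫₀¹ (ln(t·a + (1−t)·b) − t·ln(a) − (1−t)·ln(b)) / (t(1−t)) dt = (1/2)·(ln(a) − ln(b))² holds. -/
open MeasureTheory Real intervalIntegral

private lemma S_pos {t x b : ℝ} (ht0 : 0 ≤ t) (ht1 : t ≤ 1) (hx : 0 < x) (hb : 0 < b) :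
    0 < t * x + (1 - t) * b := by
  rcases lt_or_eq_of_le ht1 with h | h
  · have h1 : 0 ≤ t * x := mul_nonneg ht0 hx.le
    have h2 : 0 < (1 - t) * b := mul_pos (by linarith) hb
    linarith
  · subst h; simpa using hx

private lemma lemA (a b t : ℝ) (ha : 0 < a) (hb : 0 < b) (ht0 : 0 < t) (ht1 : t < 1) :
    ∫ x in b..a, (x - b) / (x * (t * x + (1 - t) * b)) =
      (Real.log (t * a + (1 - t) * b) - (t * Real.log a + (1 - t) * Real.log b))
        / (t * (1 - t)) := by
  have hmin : 0 < min b a := lt_min hb ha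
  have key : ∀ x ∈ Set.uIcc b a, HasDerivAt
      (fun x => (Real.log (t * x + (1 - t) * b) - t * Real.log x) / (t * (1 - t)))
      ((x - b) / (x * (t * x + (1 - t) * b))) x := by
    intro x hx
    have hxpos : 0 < x := lt_of_lt_of_le hmin (by
      rcases Set.mem_uIcc.1 hx with h | h
      · exact le_trans (min_le_left _ _) h.1
      · exact le_trans (min_le_right _ _) h.1)
    have hS : 0 < t * x + (1 - t) * b := S_pos ht0.le ht1.le hxpos hb
    have h1 : HasDerivAt (fun x : ℝ => t * x + (1 - t) * b) t x := by
      simpa using ((hasDerivAt_id x).const_mul t).add_const ((1 - t) * b)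
    have h2 : HasDerivAt (fun x : ℝ => Real.log (t * x + (1 - t) * b))
        ((t * x + (1 - t) * b)⁻¹ * t) x := by
      have := (Real.hasDerivAt_log hS.ne').comp x h1; exact this
    have h3 : HasDerivAt (fun x : ℝ => t * Real.log x) (t * x⁻¹) x :=
      (Real.hasDerivAt_log hxpos.ne').const_mul t
    have h4 := (h2.sub h3).div_const (t * (1 - t))
    have he : ((t * x + (1 - t) * b)⁻¹ * t - t * x⁻¹) / (t * (1 - t))
        = (x - b) / (x * (t * x + (1 - t) * b)) := by
      have h1t : (1 : ℝ) - t ≠ 0 := sub_ne_zero_of_ne ht1.ne'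
      field_simp
      ring
    rw [← he]; exact h4
  have hint : IntervalIntegrable (fun x => (x - b) / (x * (t * x + (1 - t) * b)))
      MeasureTheory.volume b a := by
    apply ContinuousOn.intervalIntegrable
    apply ContinuousOn.div (by fun_prop) (by fun_prop)
    intro x hx
    have hxpos : 0 < x := lt_of_lt_of_le hmin (by
      rcases Set.mem_uIcc.1 hx with h | h
      · exact le_trans (min_le_left _ _) h.1
      · exact le_trans (min_le_right _ _) h.1)
    have hS : 0 < t * x + (1 - t) * b := S_pos ht0.le ht1.le hxpos hb
    positivity
  rw [intervalIntegral.integral_eq_sub_of_hasDerivAt key hint]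
  rw [show t * b + (1 - t) * b = b by ring]
  have ht1' : (0:ℝ) < 1 - t := by linarith
  field_simp
  ring

private lemma lemB (x b : ℝ) (hx : 0 < x) (hb : 0 < b) :
    ∫ t in (0:ℝ)..1, (x - b) / (x * (t * x + (1 - t) * b)) =
      (Real.log x - Real.log b) / x := by
  have key : ∀ t ∈ Set.uIcc (0:ℝ) 1, HasDerivAt
      (fun t => Real.log (t * x + (1 - t) * b) / x)
      ((x - b) / (x * (t * x + (1 - t) * b))) t := by
    intro t ht
    rw [Set.uIcc_of_le zero_le_one] at ht
    have hS : 0 < t * x + (1 - t) * b := S_pos ht.1 ht.2 hx hb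
    have h1 : HasDerivAt (fun t : ℝ => t * x + (1 - t) * b) (x - b) t := by
      have he : (fun t : ℝ => t * x + (1 - t) * b) = fun t : ℝ => (x - b) * t + b := by
        funext s; ring
      rw [he]
      simpa using ((hasDerivAt_id t).const_mul (x - b)).add_const b
    have h2 : HasDerivAt (fun t : ℝ => Real.log (t * x + (1 - t) * b))
        ((t * x + (1 - t) * b)⁻¹ * (x - b)) t := by
      have := (Real.hasDerivAt_log hS.ne').comp t h1; exact this
    have h4 := h2.div_const x
    have he : (t * x + (1 - t) * b)⁻¹ * (x - b) / x
        = (x - b) / (x * (t * x + (1 - t) * b)) := by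
      rw [mul_comm ((t * x + (1 - t) * b)⁻¹) (x - b), ← div_eq_mul_inv, div_div,
        mul_comm (t * x + (1 - t) * b) x]
    rw [← he]; exact h4
  have hint : IntervalIntegrable (fun t => (x - b) / (x * (t * x + (1 - t) * b)))
      MeasureTheory.volume 0 1 := by
    apply ContinuousOn.intervalIntegrable
    apply ContinuousOn.div (by fun_prop) (by fun_prop)
    intro t ht
    rw [Set.uIcc_of_le zero_le_one] at ht
    have hS : 0 < t * x + (1 - t) * b := S_pos ht.1 ht.2 hx hb
    positivity
  rw [intervalIntegral.integral_eq_sub_of_hasDerivAt key hint]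
  rw [show (1:ℝ) * x + (1 - 1) * b = x by ring, show (0:ℝ) * x + (1 - 0) * b = b by ring]
  rw [sub_div]

private lemma lemC (a b : ℝ) (ha : 0 < a) (hb : 0 < b) :
    ∫ x in b..a, (Real.log x - Real.log b) / x =
      (1 / 2) * (Real.log a - Real.log b) ^ 2 := by
  have hmin : 0 < min b a := lt_min hb ha
  have key : ∀ x ∈ Set.uIcc b a, HasDerivAt
      (fun x => (1 / 2) * (Real.log x - Real.log b) ^ 2)
      ((Real.log x - Real.log b) / x) x := by
    intro x hx
    have hxpos : 0 < x := lt_of_lt_of_le hmin (by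
      rcases Set.mem_uIcc.1 hx with h | h
      · exact le_trans (min_le_left _ _) h.1
      · exact le_trans (min_le_right _ _) h.1)
    have h1 : HasDerivAt (fun x : ℝ => Real.log x - Real.log b) x⁻¹ x :=
      (Real.hasDerivAt_log hxpos.ne').sub_const _
    have h2 := (h1.pow 2).const_mul (1/2 : ℝ)
    have he : (1 / 2 : ℝ) * (↑2 * (Real.log x - Real.log b) ^ (2 - 1) * x⁻¹)
        = (Real.log x - Real.log b) / x := by
      norm_num
      rw [div_eq_mul_inv]
      ring
    rw [← he]; exact h2
  have hint : IntervalIntegrable (fun x => (Real.log x - Real.log b) / x)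
      MeasureTheory.volume b a := by
    apply ContinuousOn.intervalIntegrable
    apply ContinuousOn.div
    · apply ContinuousOn.sub _ continuousOn_const
      apply Real.continuousOn_log.mono
      intro x hx
      have hxpos : 0 < x := lt_of_lt_of_le hmin (by
        rcases Set.mem_uIcc.1 hx with h | h
        · exact le_trans (min_le_left _ _) h.1
        · exact le_trans (min_le_right _ _) h.1)
      exact hxpos.ne'
    · fun_prop
    · intro x hx
      have hxpos : 0 < x := lt_of_lt_of_le hmin (by
        rcases Set.mem_uIcc.1 hx with h | h
        · exact le_trans (min_le_left _ _) h.1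
        · exact le_trans (min_le_right _ _) h.1)
      exact hxpos.ne'
  rw [intervalIntegral.integral_eq_sub_of_hasDerivAt key hint]
  simp

private lemma lemMain (a b : ℝ) (ha : 0 < a) (hb : 0 < b) (hba : b ≤ a) :
    ∫ t in Set.Ioo (0 : ℝ) 1,
        (Real.log (t * a + (1 - t) * b) - (t * Real.log a + (1 - t) * Real.log b))
          / (t * (1 - t))
      = (1 / 2) * (Real.log a - Real.log b) ^ 2 := by
  -- rewrite the integrand as an inner integral in x
  have step1 : ∫ t in Set.Ioo (0 : ℝ) 1,
      (Real.log (t * a + (1 - t) * b) - (t * Real.log a + (1 - t) * Real.log b))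
        / (t * (1 - t))
      = ∫ t in Set.Ioo (0 : ℝ) 1, ∫ x in Set.Ioo b a,
          (x - b) / (x * (t * x + (1 - t) * b)) := by
    apply MeasureTheory.setIntegral_congr_fun measurableSet_Ioo
    intro t ht
    show (Real.log (t * a + (1 - t) * b) - (t * Real.log a + (1 - t) * Real.log b))
        / (t * (1 - t))
      = ∫ x in Set.Ioo b a, (x - b) / (x * (t * x + (1 - t) * b))
    rw [← lemA a b t ha hb ht.1 ht.2, intervalIntegral.integral_of_le hba,
      MeasureTheory.integral_Ioc_eq_integral_Ioo]
  -- integrability on the product for Fubini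
  have hF : MeasureTheory.Integrable
      (Function.uncurry fun (t x : ℝ) => (x - b) / (x * (t * x + (1 - t) * b)))
      ((MeasureTheory.volume.restrict (Set.Ioo (0:ℝ) 1)).prod
        (MeasureTheory.volume.restrict (Set.Ioo b a))) := by
    rw [MeasureTheory.Measure.prod_restrict, ← MeasureTheory.Measure.volume_eq_prod]
    apply MeasureTheory.IntegrableOn.mono_set
      (t := Set.Icc (0:ℝ) 1 ×ˢ Set.Icc b a)
    · apply ContinuousOn.integrableOn_compact (isCompact_Icc.prod isCompact_Icc)
      apply ContinuousOn.div (by fun_prop) (by fun_prop)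
      rintro ⟨t, x⟩ ⟨ht, hx⟩
      have hxpos : 0 < x := lt_of_lt_of_le hb hx.1
      have hS : 0 < t * x + (1 - t) * b := S_pos ht.1 ht.2 hxpos hb
      positivity
    · exact Set.prod_mono Set.Ioo_subset_Icc_self Set.Ioo_subset_Icc_self
  rw [step1, MeasureTheory.integral_integral_swap hF]
  have step2 : ∫ x in Set.Ioo b a, ∫ t in Set.Ioo (0:ℝ) 1,
      (x - b) / (x * (t * x + (1 - t) * b))
      = ∫ x in Set.Ioo b a, (Real.log x - Real.log b) / x := by
    apply MeasureTheory.setIntegral_congr_fun measurableSet_Ioo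
    intro x hx
    show (∫ t in Set.Ioo (0:ℝ) 1, (x - b) / (x * (t * x + (1 - t) * b)))
      = (Real.log x - Real.log b) / x
    have hxpos : 0 < x := lt_of_lt_of_le hb hx.1.le
    rw [← MeasureTheory.integral_Ioc_eq_integral_Ioo,
      ← intervalIntegral.integral_of_le zero_le_one]
    exact lemB x b hxpos hb
  rw [step2, ← MeasureTheory.integral_Ioc_eq_integral_Ioo,
    ← intervalIntegral.integral_of_le hba]
  exact lemC a b ha hb

/-- For `a, b > 0` the Widom functional of the logarithm evaluates explicitly:
`U(a,b;ln) = ∫₀¹ (ln(t·a+(1−t)·b) − t·ln a − (1−t)·ln b)/(t(1−t)) dt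
           = (1/2)·(ln a − ln b)²`. -/
theorem widom_functional_log (a b : ℝ) (ha : 0 < a) (hb : 0 < b) :
    ∫ t in Set.Ioo (0 : ℝ) 1,
        (Real.log (t * a + (1 - t) * b) - (t * Real.log a + (1 - t) * Real.log b))
          / (t * (1 - t))
      = (1 / 2) * (Real.log a - Real.log b) ^ 2 := by
  rcases le_total b a with hba | hab
  · exact lemMain a b ha hb hba
  · set f : ℝ → ℝ := fun t =>
      (Real.log (t * a + (1 - t) * b) - (t * Real.log a + (1 - t) * Real.log b))
        / (t * (1 - t)) with hf
    have e1 : ∫ t in Set.Ioo (0 : ℝ) 1, f t = ∫ t in (0:ℝ)..1, f t := by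
      rw [intervalIntegral.integral_of_le zero_le_one,
        MeasureTheory.integral_Ioc_eq_integral_Ioo]
    have e2 : ∫ t in (0:ℝ)..1, f t = ∫ t in (0:ℝ)..1, f (1 - t) := by
      rw [intervalIntegral.integral_comp_sub_left f 1]
      norm_num
    have e3 : ∀ t : ℝ, f (1 - t) =
        (Real.log (t * b + (1 - t) * a) - (t * Real.log b + (1 - t) * Real.log a))
          / (t * (1 - t)) := by
      intro t
      simp only [hf]
      rw [show (1:ℝ) - (1 - t) = t by ring,
        show (1 - t) * a + t * b = t * b + (1 - t) * a by ring,
        show (1 - t) * Real.log a + t * Real.log b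
          = t * Real.log b + (1 - t) * Real.log a by ring,
        mul_comm (1 - t) t]
    have e4 : ∫ t in (0:ℝ)..1, f (1 - t)
        = ∫ t in Set.Ioo (0 : ℝ) 1,
          (Real.log (t * b + (1 - t) * a) - (t * Real.log b + (1 - t) * Real.log a))
            / (t * (1 - t)) := by
      simp only [e3]
      rw [intervalIntegral.integral_of_le zero_le_one,
        MeasureTheory.integral_Ioc_eq_integral_Ioo]
    rw [e1, e2, e4, lemMain b a hb ha hab]
    ring
end

section
/- Let 0 < γ < 1 and define F : (0,1) → ℝ by F(t) = η_γ(t) − t^γ/(1−γ). Then for each k ∈ {0,1,2}, the limit lim_{t→0⁺} t^{k−γ} · F^{(k)}(t) = 0 holds, where F^{(k)} denotes the k-th derivative of F. -/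
open Real Filter Set Topology

namespace RenyiAux

noncomputable def g (γ t : ℝ) : ℝ := t ^ γ + (1 - t) ^ γ
noncomputable def N (γ t : ℝ) : ℝ := γ * t ^ (γ - 1) - γ * (1 - t) ^ (γ - 1)
noncomputable def Np (γ t : ℝ) : ℝ :=
  γ * (γ - 1) * t ^ (γ - 2) + γ * (γ - 1) * (1 - t) ^ (γ - 2)
noncomputable def F1 (γ t : ℝ) : ℝ :=
  (1 / (1 - γ)) * (N γ t / g γ t) - γ * t ^ (γ - 1) / (1 - γ)
noncomputable def F2 (γ t : ℝ) : ℝ :=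
  (1 / (1 - γ)) * ((Np γ t * g γ t - N γ t * N γ t) / (g γ t) ^ 2)
    - γ * (γ - 1) * t ^ (γ - 2) / (1 - γ)

variable {γ t : ℝ}

lemma g_pos (ht : t ∈ Ioo (0:ℝ) 1) : 0 < g γ t :=
  add_pos (rpow_pos_of_pos ht.1 _) (rpow_pos_of_pos (by linarith [ht.2]) _)

lemma oneSub_ne (ht : t ∈ Ioo (0:ℝ) 1) : (1:ℝ) - t ≠ 0 :=
  (by linarith [ht.2] : (0:ℝ) < 1 - t).ne'

lemma hasDerivAt_oneSub : HasDerivAt (fun s : ℝ => 1 - s) (-1 : ℝ) t := by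
  simpa [Pi.sub_def] using (hasDerivAt_const t (1:ℝ)).sub (hasDerivAt_id t)

lemma hasDerivAt_g (ht : t ∈ Ioo (0:ℝ) 1) : HasDerivAt (g γ) (N γ t) t := by
  have h1 : HasDerivAt (fun s : ℝ => s ^ γ) (γ * t ^ (γ - 1)) t :=
    Real.hasDerivAt_rpow_const (Or.inl ht.1.ne')
  have h2 : HasDerivAt (fun s : ℝ => (1 - s) ^ γ) (γ * (1 - t) ^ (γ - 1) * (-1)) t :=
    (Real.hasDerivAt_rpow_const (p := γ) (Or.inl (oneSub_ne ht))).comp t hasDerivAt_oneSub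
  have h := h1.add h2
  have hv : γ * t ^ (γ - 1) + γ * (1 - t) ^ (γ - 1) * (-1) = N γ t := by
    simp only [N]; ring
  rw [hv] at h
  exact h

lemma hasDerivAt_N (ht : t ∈ Ioo (0:ℝ) 1) : HasDerivAt (N γ) (Np γ t) t := by
  have h1 : HasDerivAt (fun s : ℝ => s ^ (γ - 1)) ((γ - 1) * t ^ (γ - 1 - 1)) t :=
    Real.hasDerivAt_rpow_const (Or.inl ht.1.ne')
  have h2 : HasDerivAt (fun s : ℝ => (1 - s) ^ (γ - 1))
      ((γ - 1) * (1 - t) ^ (γ - 1 - 1) * (-1)) t :=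
    (Real.hasDerivAt_rpow_const (p := γ - 1) (Or.inl (oneSub_ne ht))).comp t hasDerivAt_oneSub
  have h := (h1.const_mul γ).sub (h2.const_mul γ)
  have hv : γ * ((γ - 1) * t ^ (γ - 1 - 1)) - γ * ((γ - 1) * (1 - t) ^ (γ - 1 - 1) * (-1))
      = Np γ t := by
    simp only [Np, show γ - 1 - 1 = γ - 2 by ring]; ring
  rw [hv] at h
  exact h

lemma hasDerivAt_F (hγ1 : γ ≠ 1) (ht : t ∈ Ioo (0:ℝ) 1) :
    HasDerivAt (fun s : ℝ => renyiEntropy γ s - s ^ γ / (1 - γ)) (F1 γ t) t := by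
  have hlog : HasDerivAt (fun s : ℝ => (1 / (1 - γ)) * Real.log (g γ s))
      ((1 / (1 - γ)) * (N γ t / g γ t)) t :=
    ((hasDerivAt_g ht).log (g_pos ht).ne').const_mul _
  have hpow : HasDerivAt (fun s : ℝ => s ^ γ / (1 - γ)) (γ * t ^ (γ - 1) / (1 - γ)) t :=
    (Real.hasDerivAt_rpow_const (Or.inl ht.1.ne')).div_const _
  have h := hlog.sub hpow
  refine h.congr_of_eventuallyEq ?_
  filter_upwards [isOpen_Ioo.mem_nhds ht] with s hs
  simp only [renyiEntropy, if_pos hs, if_neg hγ1, g, Pi.sub_apply]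

lemma hasDerivAt_F1 (ht : t ∈ Ioo (0:ℝ) 1) : HasDerivAt (F1 γ) (F2 γ t) t := by
  have hdiv : HasDerivAt (fun s : ℝ => N γ s / g γ s)
      ((Np γ t * g γ t - N γ t * N γ t) / (g γ t) ^ 2) t :=
    (hasDerivAt_N ht).div (hasDerivAt_g ht) (g_pos ht).ne'
  have hpow : HasDerivAt (fun s : ℝ => γ * s ^ (γ - 1) / (1 - γ))
      (γ * (γ - 1) * t ^ (γ - 2) / (1 - γ)) t := by
    have := ((Real.hasDerivAt_rpow_const (p := γ - 1)
      (Or.inl ht.1.ne')).const_mul γ).div_const (1 - γ)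
    simpa [show γ - 1 - 1 = γ - 2 by ring, mul_assoc] using this
  exact ((hdiv.const_mul _).sub hpow)

end RenyiAux

namespace RenyiAux

lemma tendsto_rpow_zero {p : ℝ} (hp : 0 < p) :
    Tendsto (fun t : ℝ => t ^ p) (𝓝[>] (0:ℝ)) (𝓝 0) := by
  have h := (Real.continuousAt_rpow_const 0 p (Or.inr hp.le)).tendsto
  rw [Real.zero_rpow hp.ne'] at h
  exact h.mono_left nhdsWithin_le_nhds

lemma tendsto_oneSub_rpow (p : ℝ) :
    Tendsto (fun t : ℝ => (1 - t) ^ p) (𝓝[>] (0:ℝ)) (𝓝 1) := by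
  have h1 : ContinuousAt (fun x : ℝ => x ^ p) 1 :=
    Real.continuousAt_rpow_const 1 p (Or.inl one_ne_zero)
  have h2 : Tendsto (fun t : ℝ => 1 - t) (𝓝[>] (0:ℝ)) (𝓝 1) := by
    have h : Tendsto (fun t : ℝ => 1 - t) (𝓝 (0:ℝ)) (𝓝 1) := by
      simpa [Pi.sub_def] using (continuous_const.sub continuous_id).tendsto (0:ℝ)
    exact h.mono_left nhdsWithin_le_nhds
  simpa [Real.one_rpow, Function.comp_def] using h1.tendsto.comp h2

lemma tendsto_g {γ : ℝ} (hγ0 : 0 < γ) :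
    Tendsto (fun t : ℝ => g γ t) (𝓝[>] (0:ℝ)) (𝓝 1) := by
  have := (tendsto_rpow_zero hγ0).add (tendsto_oneSub_rpow γ)
  simpa [g] using this

end RenyiAux

/-- For `0 < γ < 1` and `F(t) = η_γ(t) − t^γ/(1−γ)`, one has
`lim_{t→0⁺} t^{k−γ}·F^{(k)}(t) = 0` for `k = 0, 1, 2`. -/
theorem renyiEntropy_eff_lt_one {γ : ℝ} (hγ0 : 0 < γ) (hγ1 : γ < 1)
    (k : ℕ) (hk : k ≤ 2) :
    Filter.Tendsto
      (fun t : ℝ => t ^ ((k : ℝ) - γ)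
        * iteratedDeriv k (fun s : ℝ => renyiEntropy γ s - s ^ γ / (1 - γ)) t)
      (nhdsWithin 0 (Set.Ioi 0)) (nhds 0) := by
  have hmem : Set.Ioo (0:ℝ) 1 ∈ 𝓝[>] (0:ℝ) :=
    Ioo_mem_nhdsGT_of_mem (by norm_num : (0:ℝ) ∈ Set.Ico (0:ℝ) 1)
  have hγ1' : γ ≠ 1 := ne_of_lt hγ1
  have h1γ : (0:ℝ) < 1 - γ := by linarith
  interval_cases k
  · -- k = 0
    have hbnd : Tendsto (fun t : ℝ => (t ^ γ + t ^ (1 - γ)) / (1 - γ))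
        (𝓝[>] (0:ℝ)) (𝓝 ((0 + 0) / (1 - γ))) :=
      ((RenyiAux.tendsto_rpow_zero hγ0).add (RenyiAux.tendsto_rpow_zero h1γ)).div_const _
    norm_num at hbnd
    refine squeeze_zero_norm' ?_ hbnd
    filter_upwards [hmem] with t ht
    have ht0 := ht.1
    have ht1 : (0:ℝ) < 1 - t := by linarith [ht.2]
    have hGpos : (0:ℝ) < RenyiAux.g γ t := RenyiAux.g_pos ht
    set G := RenyiAux.g γ t with hGdef
    have hG1 : 1 ≤ G := by
      have h1 : t ^ (1:ℝ) ≤ t ^ γ :=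
        Real.rpow_le_rpow_of_exponent_ge ht0 ht.2.le hγ1.le
      have h2 : (1 - t) ^ (1:ℝ) ≤ (1 - t) ^ γ :=
        Real.rpow_le_rpow_of_exponent_ge ht1 (by linarith [ht.1]) hγ1.le
      rw [Real.rpow_one] at h1 h2
      simp only [hGdef, RenyiAux.g]
      linarith
    have hup : G - 1 ≤ t ^ γ := by
      have h2 : (1 - t) ^ γ ≤ 1 := Real.rpow_le_one ht1.le (by linarith [ht.1]) hγ0.le
      simp only [hGdef, RenyiAux.g]
      linarith
    have hlogup : Real.log G ≤ G - 1 := Real.log_le_sub_one_of_pos (by linarith)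
    have hloglow : 1 - 1 / G ≤ Real.log G := by
      have h := Real.log_le_sub_one_of_pos (x := G⁻¹) (by positivity)
      rw [Real.log_inv] at h
      have : G⁻¹ = 1 / G := by rw [one_div]
      linarith [h, this ▸ h]
    have hlogest : |Real.log G - (G - 1)| ≤ (G - 1) ^ 2 := by
      rw [abs_le]
      constructor
      · have hq : (G - 1) - (G - 1) / G ≤ (G - 1) ^ 2 := by
          have hGne : G ≠ 0 := by linarith
          have : (G - 1) - (G - 1) / G = (G - 1) ^ 2 / G := by field_simp
          rw [this]
          exact div_le_self (by positivity) hG1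
        have h1G : 1 - 1 / G = (G - 1) / G := by field_simp
        nlinarith [hloglow, hq]
      · nlinarith [hlogup]
    have hvest : |(1 - t) ^ γ - 1| ≤ t := by
      rw [abs_le]
      constructor
      · have h2 : (1 - t) ^ (1:ℝ) ≤ (1 - t) ^ γ :=
          Real.rpow_le_rpow_of_exponent_ge ht1 (by linarith [ht.1]) hγ1.le
        rw [Real.rpow_one] at h2
        linarith
      · have h2 : (1 - t) ^ γ ≤ 1 := Real.rpow_le_one ht1.le (by linarith [ht.1]) hγ0.le
        linarith
    have hfval : renyiEntropy γ t - t ^ γ / (1 - γ)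
        = (Real.log G - t ^ γ) / (1 - γ) := by
      simp only [renyiEntropy, if_pos ht, if_neg hγ1', hGdef, RenyiAux.g]
      ring
    have hsplit : Real.log G - t ^ γ
        = (Real.log G - (G - 1)) + ((1 - t) ^ γ - 1) := by
      simp only [hGdef, RenyiAux.g]; ring
    have habs : |Real.log G - t ^ γ| ≤ (t ^ γ) ^ 2 + t := by
      rw [hsplit]
      calc |Real.log G - (G - 1) + ((1 - t) ^ γ - 1)|
          ≤ |Real.log G - (G - 1)| + |(1 - t) ^ γ - 1| := abs_add_le _ _
        _ ≤ (G - 1) ^ 2 + t := add_le_add hlogest hvest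
        _ ≤ (t ^ γ) ^ 2 + t := by
            have : (G - 1) ^ 2 ≤ (t ^ γ) ^ 2 := by nlinarith [hG1, hup]
            linarith
    have hpow0 : (0:ℝ) < t ^ ((0:ℕ) - γ : ℝ) := Real.rpow_pos_of_pos ht0 _
    rw [iteratedDeriv_zero, hfval]
    rw [norm_mul, Real.norm_eq_abs, Real.norm_eq_abs, abs_of_pos hpow0, abs_div,
      abs_of_pos h1γ]
    have key : t ^ ((0:ℕ) - γ : ℝ) * ((t ^ γ) ^ 2 + t) = t ^ γ + t ^ (1 - γ) := by
      have e1 : t ^ ((0:ℕ) - γ : ℝ) * (t ^ γ) ^ 2 = t ^ γ := by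
        rw [sq, ← mul_assoc, ← Real.rpow_add ht0, ← Real.rpow_add ht0]
        norm_num
      have e2 : t ^ ((0:ℕ) - γ : ℝ) * t = t ^ (1 - γ) := by
        nth_rewrite 2 [← Real.rpow_one t]
        rw [← Real.rpow_add ht0]
        norm_num
        rw [show -γ + 1 = 1 - γ by ring]
      rw [mul_add, e1, e2]
    calc t ^ ((0:ℕ) - γ : ℝ) * (|Real.log G - t ^ γ| / (1 - γ))
        ≤ t ^ ((0:ℕ) - γ : ℝ) * (((t ^ γ) ^ 2 + t) / (1 - γ)) :=
          mul_le_mul_of_nonneg_left ((div_le_div_iff_of_pos_right h1γ).mpr habs) hpow0.le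
      _ = (t ^ γ + t ^ (1 - γ)) / (1 - γ) := by
          rw [mul_div_assoc', key]
  · -- k = 1
    have E1lim : Tendsto (fun t : ℝ =>
        (γ / (1 - γ)) * ((1 - t ^ (1 - γ) * (1 - t) ^ (γ - 1)) / RenyiAux.g γ t - 1))
        (𝓝[>] (0:ℝ)) (𝓝 ((γ / (1 - γ)) * ((1 - 0 * 1) / 1 - 1))) := by
      apply Tendsto.const_mul
      exact ((tendsto_const_nhds.sub
        ((RenyiAux.tendsto_rpow_zero h1γ).mul (RenyiAux.tendsto_oneSub_rpow _))).div
        (RenyiAux.tendsto_g hγ0) one_ne_zero).sub tendsto_const_nhds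
    norm_num at E1lim
    refine Tendsto.congr' ?_ E1lim
    filter_upwards [hmem] with t ht
    have ht0 := ht.1
    have hd : iteratedDeriv 1 (fun s : ℝ => renyiEntropy γ s - s ^ γ / (1 - γ)) t
        = RenyiAux.F1 γ t := by
      rw [iteratedDeriv_one]
      exact (RenyiAux.hasDerivAt_F hγ1' ht).deriv
    rw [hd]
    have hB : t ^ (γ - 1) = t ^ γ / t := by
      rw [Real.rpow_sub ht0, Real.rpow_one]
    have hD : t ^ (1 - γ) = t / t ^ γ := by
      rw [Real.rpow_sub ht0, Real.rpow_one]
    have hGne : RenyiAux.g γ t ≠ 0 := (RenyiAux.g_pos ht).ne'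
    have hAne : t ^ γ ≠ 0 := (Real.rpow_pos_of_pos ht0 γ).ne'
    simp only [RenyiAux.F1, RenyiAux.N, RenyiAux.g] at *
    push_cast
    rw [hB, hD]
    field_simp
  · -- k = 2
    have E2lim : Tendsto (fun t : ℝ =>
        (1 / (1 - γ)) * (γ * (γ - 1) * (1 + t ^ (2 - γ) * (1 - t) ^ (γ - 2)) / RenyiAux.g γ t
          - t ^ γ * (γ - γ * (t ^ (1 - γ) * (1 - t) ^ (γ - 1))) ^ 2 / (RenyiAux.g γ t) ^ 2
          - γ * (γ - 1)))
        (𝓝[>] (0:ℝ))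
        (𝓝 ((1 / (1 - γ)) * (γ * (γ - 1) * (1 + 0 * 1) / 1
          - 0 * (γ - γ * (0 * 1)) ^ 2 / 1 ^ 2 - γ * (γ - 1)))) := by
      apply Tendsto.const_mul
      have hE0 : Tendsto (fun t : ℝ => t ^ (2 - γ)) (𝓝[>] (0:ℝ)) (𝓝 0) :=
        RenyiAux.tendsto_rpow_zero (by linarith)
      have hA0 : Tendsto (fun t : ℝ => t ^ γ) (𝓝[>] (0:ℝ)) (𝓝 0) :=
        RenyiAux.tendsto_rpow_zero hγ0
      have hD0 : Tendsto (fun t : ℝ => t ^ (1 - γ)) (𝓝[>] (0:ℝ)) (𝓝 0) :=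
        RenyiAux.tendsto_rpow_zero h1γ
      have hg := RenyiAux.tendsto_g (γ := γ) hγ0
      exact ((((tendsto_const_nhds.mul (tendsto_const_nhds.add
          (hE0.mul (RenyiAux.tendsto_oneSub_rpow _)))).div hg one_ne_zero).sub
        (((hA0.mul ((tendsto_const_nhds.sub (tendsto_const_nhds.mul
          (hD0.mul (RenyiAux.tendsto_oneSub_rpow _)))).pow 2))).div
          (hg.pow 2) (by norm_num))).sub tendsto_const_nhds)
    norm_num at E2lim
    refine Tendsto.congr' ?_ E2lim
    filter_upwards [hmem] with t ht
    have ht0 := ht.1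
    have hd : iteratedDeriv 2 (fun s : ℝ => renyiEntropy γ s - s ^ γ / (1 - γ)) t
        = RenyiAux.F2 γ t := by
      rw [show (2:ℕ) = 1 + 1 from rfl, iteratedDeriv_succ, iteratedDeriv_one]
      have hEq : deriv (fun s : ℝ => renyiEntropy γ s - s ^ γ / (1 - γ))
          =ᶠ[𝓝 t] RenyiAux.F1 γ := by
        filter_upwards [isOpen_Ioo.mem_nhds ht] with s hs
        exact (RenyiAux.hasDerivAt_F hγ1' hs).deriv
      rw [hEq.deriv_eq]
      exact (RenyiAux.hasDerivAt_F1 ht).deriv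
    rw [hd]
    have h2r : t ^ (2:ℝ) = t ^ 2 := by
      rw [show (2:ℝ) = ((2:ℕ):ℝ) by norm_num, Real.rpow_natCast]
    have hB : t ^ (γ - 1) = t ^ γ / t := by
      rw [Real.rpow_sub ht0, Real.rpow_one]
    have hC : t ^ (γ - 2) = t ^ γ / t ^ 2 := by
      rw [Real.rpow_sub ht0, h2r]
    have hD : t ^ (1 - γ) = t / t ^ γ := by
      rw [Real.rpow_sub ht0, Real.rpow_one]
    have hE : t ^ (2 - γ) = t ^ 2 / t ^ γ := by
      rw [Real.rpow_sub ht0, h2r]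
    have hGne : RenyiAux.g γ t ≠ 0 := (RenyiAux.g_pos ht).ne'
    have hAne : t ^ γ ≠ 0 := (Real.rpow_pos_of_pos ht0 γ).ne'
    simp only [RenyiAux.F2, RenyiAux.N, RenyiAux.Np, RenyiAux.g] at *
    push_cast
    rw [hB, hC, hD, hE]
    field_simp
end

section
/- Let 1 < γ < 2 and define F : (0,1) → ℝ by F(t) = η_γ(t) − (γ/(γ−1))·t − t^γ/(1−γ). Then for each k ∈ {0,1,2}, the limit lim_{t→0⁺} t^{k−γ} · F^{(k)}(t) = 0 holds, where F^{(k)} denotes the k-th derivative of F. -/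
open Real Filter Set

noncomputable def ruAux (γ t : ℝ) : ℝ := t ^ γ + (1 - t) ^ γ


noncomputable def rG1Aux (γ t : ℝ) : ℝ :=
  γ / (1 - γ) * ((t ^ (γ-1) - (1-t) ^ (γ-1)) / ruAux γ t + 1 - t ^ (γ-1))


noncomputable def rG2Aux (γ t : ℝ) : ℝ :=
  γ / (1 - γ) * ((γ-1) * (t ^ (γ-2) + (1-t) ^ (γ-2)) / ruAux γ t
    - γ * (t ^ (γ-1) - (1-t) ^ (γ-1))^2 / (ruAux γ t)^2 - (γ-1) * t ^ (γ-2))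


lemma ruAux_pos {γ t : ℝ} (ht : t ∈ Set.Ioo (0:ℝ) 1) : 0 < ruAux γ t := by
  have h2 : (0:ℝ) < 1 - t := by have := ht.2; linarith
  exact add_pos (Real.rpow_pos_of_pos ht.1 γ) (Real.rpow_pos_of_pos h2 γ)


lemma tpowAux {a : ℝ} (ha : 0 < a) :
    Filter.Tendsto (fun t : ℝ => t ^ a) (nhdsWithin 0 (Set.Ioi 0)) (nhds 0) := by
  have := (Real.continuousAt_rpow_const 0 a (Or.inr ha.le)).tendsto
  rw [Real.zero_rpow ha.ne'] at this
  exact this.mono_left nhdsWithin_le_nhds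


lemma tqAux (a : ℝ) :
    Filter.Tendsto (fun t : ℝ => (1 - t) ^ a) (nhdsWithin 0 (Set.Ioi 0)) (nhds 1) := by
  have h : ContinuousAt (fun t : ℝ => (1 - t) ^ a) 0 := by
    apply ContinuousAt.rpow_const (by fun_prop) (Or.inl (by norm_num))
  have := h.tendsto
  simp only [sub_zero, Real.one_rpow] at this
  exact this.mono_left nhdsWithin_le_nhds


lemma tuAux {γ : ℝ} (hγ : 0 < γ) :
    Filter.Tendsto (fun t : ℝ => ruAux γ t) (nhdsWithin 0 (Set.Ioi 0)) (nhds 1) := by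
  have := (tpowAux hγ).add (tqAux γ)
  simpa [ruAux] using this


lemma hasDerivAt_G0Aux {γ t : ℝ} (hγ1 : 1 < γ) (ht : t ∈ Set.Ioo (0:ℝ) 1) :
    HasDerivAt (fun s : ℝ => (1/(1-γ)) * Real.log (ruAux γ s) - (γ/(γ-1)) * s - s ^ γ / (1-γ))
      (rG1Aux γ t) t := by
  have ht0 : (0:ℝ) < t := ht.1
  have ht1 : (0:ℝ) < 1 - t := by have := ht.2; linarith
  have hune := (ruAux_pos (γ := γ) ht).ne'
  have h1 : HasDerivAt (fun s : ℝ => s ^ γ) (γ * t ^ (γ-1)) t :=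
    Real.hasDerivAt_rpow_const (Or.inl ht0.ne')
  have hsub : HasDerivAt (fun s : ℝ => 1 - s) (-1) t := by
    simpa using (hasDerivAt_id t).const_sub 1
  have h2 : HasDerivAt (fun s : ℝ => (1-s) ^ γ) (γ * (1-t) ^ (γ-1) * (-1)) t :=
    (Real.hasDerivAt_rpow_const (x := 1 - t) (Or.inl ht1.ne')).comp t hsub
  have hu : HasDerivAt (fun s : ℝ => ruAux γ s) (γ * t ^ (γ-1) + γ * (1-t) ^ (γ-1) * (-1)) t := by
    simpa [ruAux, Pi.add_def] using h1.add h2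
  have hlog : HasDerivAt (fun s : ℝ => Real.log (ruAux γ s))
      ((γ * t ^ (γ-1) + γ * (1-t) ^ (γ-1) * (-1)) / ruAux γ t) t := hu.log hune
  have hlin : HasDerivAt (fun s : ℝ => (γ/(γ-1)) * s) (γ/(γ-1)) t := by
    simpa using (hasDerivAt_id t).const_mul (γ/(γ-1))
  have this : HasDerivAt (fun s : ℝ => (1/(1-γ)) * Real.log (ruAux γ s) - (γ/(γ-1)) * s - s ^ γ / (1-γ)) _ t :=
    ((hlog.const_mul (1/(1-γ))).sub hlin).sub (h1.div_const (1-γ))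
  convert this using 1
  have hγne : (1:ℝ) - γ ≠ 0 := by intro h; nlinarith
  have hγne' : γ - 1 ≠ 0 := by intro h; nlinarith
  simp only [rG1Aux]
  field_simp
  ring


lemma hasDerivAt_G1Aux {γ t : ℝ} (hγ1 : 1 < γ) (ht : t ∈ Set.Ioo (0:ℝ) 1) :
    HasDerivAt (rG1Aux γ) (rG2Aux γ t) t := by
  have ht0 : (0:ℝ) < t := ht.1
  have ht1 : (0:ℝ) < 1 - t := by have := ht.2; linarith
  have hune := (ruAux_pos (γ := γ) ht).ne'
  have h1 : HasDerivAt (fun s : ℝ => s ^ γ) (γ * t ^ (γ-1)) t :=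
    Real.hasDerivAt_rpow_const (Or.inl ht0.ne')
  have hsub : HasDerivAt (fun s : ℝ => 1 - s) (-1) t := by
    simpa using (hasDerivAt_id t).const_sub 1
  have h2 : HasDerivAt (fun s : ℝ => (1-s) ^ γ) (γ * (1-t) ^ (γ-1) * (-1)) t :=
    (Real.hasDerivAt_rpow_const (x := 1 - t) (Or.inl ht1.ne')).comp t hsub
  have hu : HasDerivAt (fun s : ℝ => ruAux γ s) (γ * t ^ (γ-1) + γ * (1-t) ^ (γ-1) * (-1)) t := by
    simpa [ruAux, Pi.add_def] using h1.add h2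
  have h1' : HasDerivAt (fun s : ℝ => s ^ (γ-1)) ((γ-1) * t ^ (γ-2)) t := by
    have h := Real.hasDerivAt_rpow_const (x := t) (p := γ-1) (Or.inl ht0.ne')
    rwa [show γ-1-1 = γ-2 by ring] at h
  have h2' : HasDerivAt (fun s : ℝ => (1-s) ^ (γ-1)) ((γ-1) * (1-t) ^ (γ-2) * (-1)) t := by
    have h := (Real.hasDerivAt_rpow_const (x := 1 - t) (p := γ-1) (Or.inl ht1.ne')).comp t hsub
    rwa [show γ-1-1 = γ-2 by ring] at h
  have hw : HasDerivAt (fun s : ℝ => s ^ (γ-1) - (1-s) ^ (γ-1))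
      ((γ-1) * t ^ (γ-2) - (γ-1) * (1-t) ^ (γ-2) * (-1)) t := h1'.sub h2'
  have hdiv : HasDerivAt (fun s : ℝ => (s ^ (γ-1) - (1-s) ^ (γ-1)) / ruAux γ s)
      ((((γ-1) * t ^ (γ-2) - (γ-1) * (1-t) ^ (γ-2) * (-1)) * ruAux γ t
        - (t ^ (γ-1) - (1-t) ^ (γ-1)) * (γ * t ^ (γ-1) + γ * (1-t) ^ (γ-1) * (-1)))
        / (ruAux γ t)^2) t := hw.div hu hune
  have hd := ((hdiv.add_const 1).sub h1').const_mul (γ / (1-γ))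
  have hc : (1:ℝ) - γ ≠ 0 := by intro h; nlinarith
  have hval : rG2Aux γ t = γ / (1-γ) *
      ((((γ-1) * t ^ (γ-2) - (γ-1) * (1-t) ^ (γ-2) * (-1)) * ruAux γ t
        - (t ^ (γ-1) - (1-t) ^ (γ-1)) * (γ * t ^ (γ-1) + γ * (1-t) ^ (γ-1) * (-1)))
        / (ruAux γ t)^2 - (γ-1) * t ^ (γ-2)) := by
    simp only [rG2Aux]
    field_simp
    ring
  rw [hval]
  exact hd


lemma tendsto1Aux {γ : ℝ} (hγ1 : 1 < γ) (hγ2 : γ < 2) :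
    Filter.Tendsto (fun t : ℝ => t ^ (1 - γ) * rG1Aux γ t)
      (nhdsWithin 0 (Set.Ioi 0)) (nhds 0) := by
  have h01 : Set.Ioo (0:ℝ) 1 ∈ nhdsWithin (0:ℝ) (Set.Ioi 0) :=
    Ioo_mem_nhdsGT one_pos
  have heq : (fun t : ℝ => γ / (1 - γ) *
        ((1 + t - (1-t) ^ γ - t ^ (2-γ) * (1-t) ^ (γ-1) - t ^ γ) / ruAux γ t))
      =ᶠ[nhdsWithin (0:ℝ) (Set.Ioi 0)] (fun t => t ^ (1 - γ) * rG1Aux γ t) := by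
    filter_upwards [h01] with t ht
    have ht0 : (0:ℝ) < t := ht.1
    have ht1 : (0:ℝ) < 1 - t := by have := ht.2; linarith
    have hune := (ruAux_pos (γ := γ) ht).ne'
    have r1 : t ^ (1-γ) * t ^ (γ-1) = 1 := by
      rw [← Real.rpow_add ht0]; norm_num
    have r2 : t ^ (1-γ) * t = t ^ (2-γ) := by
      nth_rewrite 2 [← Real.rpow_one t]
      rw [← Real.rpow_add ht0]; ring_nf
    have r3 : t ^ (1-γ) * t ^ γ = t := by
      rw [← Real.rpow_add ht0]; norm_num
    have r4 : (1-t) ^ (γ-1) * (1-t) = (1-t) ^ γ := by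
      rw [← Real.rpow_add_one ht1.ne' (γ-1)]; ring_nf
    have expand : (t ^ (γ-1) - (1-t) ^ (γ-1)) / ruAux γ t + 1 - t ^ (γ-1)
        = ((t ^ (γ-1) - (1-t) ^ (γ-1)) + (1 - t ^ (γ-1)) * ruAux γ t) / ruAux γ t := by
      field_simp
      ring
    have hnum : t ^ (1-γ) * ((t ^ (γ-1) - (1-t) ^ (γ-1)) + (1 - t ^ (γ-1)) * ruAux γ t)
        = 1 + t - (1-t) ^ γ - t ^ (2-γ) * (1-t) ^ (γ-1) - t ^ γ := by
      simp only [ruAux]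
      linear_combination (-(t^γ + (1-t)^γ - 1))*r1 - (1-t)^(γ-1)*r2 + r3 - t^(1-γ)*r4
    simp only [rG1Aux]
    rw [expand, ← hnum]
    ring
  apply Filter.Tendsto.congr' heq
  have hnum : Filter.Tendsto
      (fun t : ℝ => 1 + t - (1-t) ^ γ - t ^ (2-γ) * (1-t) ^ (γ-1) - t ^ γ)
      (nhdsWithin 0 (Set.Ioi 0)) (nhds 0) := by
    have h1 : Filter.Tendsto (fun t : ℝ => 1 + t) (nhdsWithin (0:ℝ) (Set.Ioi 0)) (nhds 1) := by
      have h : Filter.Tendsto (fun t : ℝ => 1 + t) (nhds (0:ℝ)) (nhds (1 + 0)) :=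
        (continuous_const.add continuous_id).tendsto (0:ℝ)
      rw [add_zero] at h
      exact h.mono_left nhdsWithin_le_nhds
    have := ((h1.sub (tqAux γ)).sub ((tpowAux (by linarith : (0:ℝ) < 2-γ)).mul
      (tqAux (γ-1)))).sub (tpowAux (by linarith : (0:ℝ) < γ))
    simpa using this
  have := (hnum.div (tuAux (by linarith : (0:ℝ) < γ)) one_ne_zero).const_mul (γ/(1-γ))
  simpa using this


lemma tendsto2Aux {γ : ℝ} (hγ1 : 1 < γ) (hγ2 : γ < 2) :
    Filter.Tendsto (fun t : ℝ => t ^ (2 - γ) * rG2Aux γ t)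
      (nhdsWithin 0 (Set.Ioi 0)) (nhds 0) := by
  have h01 : Set.Ioo (0:ℝ) 1 ∈ nhdsWithin (0:ℝ) (Set.Ioi 0) :=
    Ioo_mem_nhdsGT one_pos
  have heq : (fun t : ℝ => γ / (1 - γ) *
        ((γ-1) * ((1 - ruAux γ t) * ruAux γ t + t ^ (2-γ) * (1-t) ^ (γ-2) * ruAux γ t)
          / (ruAux γ t)^2
        - γ * (t ^ (γ/2) - t ^ (1-γ/2) * (1-t) ^ (γ-1))^2 / (ruAux γ t)^2))
      =ᶠ[nhdsWithin (0:ℝ) (Set.Ioi 0)] (fun t => t ^ (2 - γ) * rG2Aux γ t) := by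
    filter_upwards [h01] with t ht
    have ht0 : (0:ℝ) < t := ht.1
    have ht1 : (0:ℝ) < 1 - t := by have := ht.2; linarith
    have hune := (ruAux_pos (γ := γ) ht).ne'
    have s1 : t ^ (2-γ) * t ^ (γ-2) = 1 := by
      rw [← Real.rpow_add ht0]; norm_num
    have s5 : t ^ (2-γ) * t ^ (γ-1) = t := by
      rw [← Real.rpow_add ht0, show (2-γ)+(γ-1) = (1:ℝ) by ring, Real.rpow_one]
    have s7 : t * t ^ (γ-1) = t ^ γ := by
      nth_rewrite 1 [← Real.rpow_one t]
      rw [← Real.rpow_add ht0, show (1:ℝ)+(γ-1) = γ by ring]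
    have s2 : t ^ (γ/2) * t ^ (γ/2) = t ^ γ := by
      rw [← Real.rpow_add ht0, show γ/2+γ/2 = γ by ring]
    have s3 : t ^ (γ/2) * t ^ (1-γ/2) = t := by
      rw [← Real.rpow_add ht0, show γ/2+(1-γ/2) = (1:ℝ) by ring, Real.rpow_one]
    have s4 : t ^ (1-γ/2) * t ^ (1-γ/2) = t ^ (2-γ) := by
      rw [← Real.rpow_add ht0, show (1-γ/2)+(1-γ/2) = 2-γ by ring]
    have expand2 : (γ-1) * (t ^ (γ-2) + (1-t) ^ (γ-2)) / ruAux γ t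
        - γ * (t ^ (γ-1) - (1-t) ^ (γ-1))^2 / (ruAux γ t)^2 - (γ-1) * t ^ (γ-2)
        = ((γ-1) * (t ^ (γ-2) + (1-t) ^ (γ-2)) * ruAux γ t
            - γ * (t ^ (γ-1) - (1-t) ^ (γ-1))^2
            - (γ-1) * t ^ (γ-2) * (ruAux γ t)^2) / (ruAux γ t)^2 := by
      field_simp
    have hnum2 : (γ-1) * ((1 - ruAux γ t) * ruAux γ t + t ^ (2-γ) * (1-t) ^ (γ-2) * ruAux γ t)
          - γ * (t ^ (γ/2) - t ^ (1-γ/2) * (1-t) ^ (γ-1))^2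
        = t ^ (2-γ) * ((γ-1) * (t ^ (γ-2) + (1-t) ^ (γ-2)) * ruAux γ t
            - γ * (t ^ (γ-1) - (1-t) ^ (γ-1))^2
            - (γ-1) * t ^ (γ-2) * (ruAux γ t)^2) := by
      linear_combination ((γ-1) * ((ruAux γ t)^2 - ruAux γ t)) * s1
        + (γ * (t ^ (γ-1) - 2 * (1-t) ^ (γ-1))) * s5 + γ * s7
        - (γ * ((1-t) ^ (γ-1))^2) * s4 - γ * s2 + (2 * γ * (1-t) ^ (γ-1)) * s3
    simp only [rG2Aux]
    rw [expand2, div_sub_div_same, hnum2]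
    ring
  apply Filter.Tendsto.congr' heq
  have hu := tuAux (by linarith : (0:ℝ) < γ)
  have hu2 : Filter.Tendsto (fun t : ℝ => (ruAux γ t)^2) (nhdsWithin 0 (Set.Ioi 0)) (nhds 1) := by
    have := hu.mul hu
    simpa [sq] using this
  have h1 : Filter.Tendsto
      (fun t : ℝ => (γ-1) * ((1 - ruAux γ t) * ruAux γ t + t ^ (2-γ) * (1-t) ^ (γ-2) * ruAux γ t))
      (nhdsWithin 0 (Set.Ioi 0)) (nhds 0) := by
    have ha : Filter.Tendsto (fun t : ℝ => (1 - ruAux γ t) * ruAux γ t)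
        (nhdsWithin 0 (Set.Ioi 0)) (nhds 0) := by
      have := ((tendsto_const_nhds (x := (1:ℝ))).sub hu).mul hu
      simpa using this
    have hb : Filter.Tendsto (fun t : ℝ => t ^ (2-γ) * (1-t) ^ (γ-2) * ruAux γ t)
        (nhdsWithin 0 (Set.Ioi 0)) (nhds 0) := by
      have := ((tpowAux (by linarith : (0:ℝ) < 2-γ)).mul (tqAux (γ-2))).mul hu
      simpa using this
    have := (ha.add hb).const_mul (γ-1)
    simpa using this
  have h2 : Filter.Tendsto
      (fun t : ℝ => γ * (t ^ (γ/2) - t ^ (1-γ/2) * (1-t) ^ (γ-1))^2)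
      (nhdsWithin 0 (Set.Ioi 0)) (nhds 0) := by
    have hb : Filter.Tendsto (fun t : ℝ => t ^ (γ/2) - t ^ (1-γ/2) * (1-t) ^ (γ-1))
        (nhdsWithin 0 (Set.Ioi 0)) (nhds 0) := by
      have := (tpowAux (by linarith : (0:ℝ) < γ/2)).sub
        ((tpowAux (by linarith : (0:ℝ) < 1-γ/2)).mul (tqAux (γ-1)))
      simpa using this
    have := (hb.mul hb).const_mul γ
    simpa [sq] using this
  have := ((h1.div hu2 one_ne_zero).sub (h2.div hu2 one_ne_zero)).const_mul (γ/(1-γ))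
  simpa [mul_div_assoc] using this


lemma bernoulli_low {γ t : ℝ} (hγ1 : 1 < γ) (ht : t ∈ Set.Ioo (0:ℝ) 1) :
    1 - γ * t ≤ (1 - t) ^ γ := by
  have h := one_add_mul_self_le_rpow_one_add (s := -t) (by linarith [ht.2] : (-1:ℝ) ≤ -t) hγ1.le
  rw [show (1:ℝ) + -t = 1 - t by ring] at h
  linarith


lemma bernoulli_up {γ t : ℝ} (hγ1 : 1 < γ) (hγ2 : γ < 2) (ht : t ∈ Set.Ioo (0:ℝ) 1) :
    (1 - t) ^ γ - 1 + γ * t ≤ (γ - 1) * t ^ 2 := by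
  have ht1 : (0:ℝ) < 1 - t := by have := ht.2; linarith
  have h := rpow_one_add_le_one_add_mul_self (s := -t) (by linarith [ht.2] : (-1:ℝ) ≤ -t)
    (by linarith : (0:ℝ) ≤ γ - 1) (by linarith : γ - 1 ≤ 1)
  rw [show (1:ℝ) + -t = 1 - t by ring] at h
  have hp : (1-t) ^ (γ-1) * (1-t) = (1-t) ^ γ := by
    rw [← Real.rpow_add_one ht1.ne']; ring_nf
  have h2 : (1-t) ^ (γ-1) * (1-t) ≤ (1 + (γ-1) * -t) * (1-t) :=
    mul_le_mul_of_nonneg_right h ht1.le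
  rw [hp] at h2
  nlinarith


lemma tendsto0Aux {γ : ℝ} (hγ1 : 1 < γ) (hγ2 : γ < 2) :
    Filter.Tendsto (fun t : ℝ =>
        t ^ (-γ) * ((1/(1-γ)) * Real.log (ruAux γ t) - (γ/(γ-1)) * t - t ^ γ / (1-γ)))
      (nhdsWithin 0 (Set.Ioi 0)) (nhds 0) := by
  have h01 : Set.Ioo (0:ℝ) 1 ∈ nhdsWithin (0:ℝ) (Set.Ioi 0) :=
    Ioo_mem_nhdsGT one_pos
  have hc : (1:ℝ) - γ ≠ 0 := by intro h; nlinarith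
  have hc' : γ - 1 ≠ 0 := by intro h; nlinarith
  set A : ℝ → ℝ := fun t => t ^ (-γ) * (Real.log (ruAux γ t) - (ruAux γ t - 1)) with hA
  set B : ℝ → ℝ := fun t => t ^ (-γ) * ((1-t) ^ γ - 1 + γ * t) with hB
  have tB : Filter.Tendsto B (nhdsWithin 0 (Set.Ioi 0)) (nhds 0) := by
    have tUp : Filter.Tendsto (fun t : ℝ => (γ-1) * t ^ (2-γ))
        (nhdsWithin 0 (Set.Ioi 0)) (nhds 0) := by
      have := (tpowAux (by linarith : (0:ℝ) < 2-γ)).const_mul (γ-1)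
      simpa using this
    apply tendsto_of_tendsto_of_tendsto_of_le_of_le' (tendsto_const_nhds (x := (0:ℝ))) tUp
    · filter_upwards [h01] with t ht
      have ht0 : (0:ℝ) < t := ht.1
      have := bernoulli_low hγ1 ht
      have ha : (0:ℝ) ≤ t ^ (-γ) := Real.rpow_nonneg ht0.le _
      simp only [hB]
      nlinarith
    · filter_upwards [h01] with t ht
      have ht0 : (0:ℝ) < t := ht.1
      have hup := bernoulli_up hγ1 hγ2 ht
      have ha : (0:ℝ) ≤ t ^ (-γ) := Real.rpow_nonneg ht0.le _
      have at2 : t ^ (-γ) * t ^ 2 = t ^ (2-γ) := by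
        rw [← Real.rpow_natCast t 2, ← Real.rpow_add ht0]
        norm_num
        ring_nf
      have step : t ^ (-γ) * ((1-t) ^ γ - 1 + γ * t) ≤ t ^ (-γ) * ((γ-1) * t ^ 2) :=
        mul_le_mul_of_nonneg_left hup ha
      calc B t ≤ t ^ (-γ) * ((γ-1) * t ^ 2) := step
        _ = (γ-1) * t ^ (2-γ) := by rw [← at2]; ring
  have tA : Filter.Tendsto A (nhdsWithin 0 (Set.Ioi 0)) (nhds 0) := by
    have tLo : Filter.Tendsto
        (fun t : ℝ => -((2 * t ^ γ + 2 * γ^2 * t ^ (2-γ)) / ruAux γ t))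
        (nhdsWithin 0 (Set.Ioi 0)) (nhds 0) := by
      have := ((((tpowAux (by linarith : (0:ℝ) < γ)).const_mul 2).add
        ((tpowAux (by linarith : (0:ℝ) < 2-γ)).const_mul (2*γ^2))).div
        (tuAux (by linarith : (0:ℝ) < γ)) one_ne_zero).neg
      simpa using this
    apply tendsto_of_tendsto_of_tendsto_of_le_of_le' tLo (tendsto_const_nhds (x := (0:ℝ)))
    · filter_upwards [h01] with t ht
      have ht0 : (0:ℝ) < t := ht.1
      have ht1 : (0:ℝ) < 1 - t := by have := ht.2; linarith
      have hU : 0 < ruAux γ t := ruAux_pos ht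
      have ha : (0:ℝ) ≤ t ^ (-γ) := Real.rpow_nonneg ht0.le _
      -- log lower bound
      have hinv : Real.log (ruAux γ t)⁻¹ ≤ (ruAux γ t)⁻¹ - 1 :=
        Real.log_le_sub_one_of_pos (by positivity)
      rw [Real.log_inv] at hinv
      have step1 : -(ruAux γ t - 1)^2 / ruAux γ t
          ≤ Real.log (ruAux γ t) - (ruAux γ t - 1) := by
        have e : (1 - (ruAux γ t)⁻¹) - (ruAux γ t - 1) = -(ruAux γ t - 1)^2 / ruAux γ t := by
          field_simp
          ring
        nlinarith [e]
      -- bound (U-1)^2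
      have hple : (1-t) ^ γ ≤ 1 := Real.rpow_le_one ht1.le (by linarith [ht.1]) (by linarith)
      have hlow := bernoulli_low hγ1 ht
      have hcnn : (0:ℝ) ≤ t ^ γ := Real.rpow_nonneg ht0.le _
      have habs : (ruAux γ t - 1)^2 ≤ (t ^ γ + γ * t)^2 := by
        apply sq_le_sq'
        · simp only [ruAux]; nlinarith
        · simp only [ruAux]; nlinarith
      have hsq : (t ^ γ + γ * t)^2 ≤ 2 * (t ^ γ)^2 + 2 * (γ * t)^2 := by
        nlinarith [sq_nonneg (t ^ γ - γ * t)]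
      have ac1 : t ^ (-γ) * t ^ γ = 1 := by
        rw [← Real.rpow_add ht0]; norm_num
      have at2 : t ^ (-γ) * t ^ 2 = t ^ (2-γ) := by
        rw [← Real.rpow_natCast t 2, ← Real.rpow_add ht0]
        norm_num
        ring_nf
      have key : t ^ (-γ) * (2 * (t ^ γ)^2 + 2 * (γ * t)^2)
          = 2 * t ^ γ + 2 * γ^2 * t ^ (2-γ) := by
        linear_combination (2 * t ^ γ) * ac1 + 2 * γ^2 * at2
      have hfin : t ^ (-γ) * (ruAux γ t - 1)^2 ≤ 2 * t ^ γ + 2 * γ^2 * t ^ (2-γ) := by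
        calc t ^ (-γ) * (ruAux γ t - 1)^2 ≤ t ^ (-γ) * (2 * (t ^ γ)^2 + 2 * (γ * t)^2) := by
              apply mul_le_mul_of_nonneg_left _ ha
              linarith
          _ = _ := key
      calc -((2 * t ^ γ + 2 * γ^2 * t ^ (2-γ)) / ruAux γ t)
          ≤ -((t ^ (-γ) * (ruAux γ t - 1)^2) / ruAux γ t) := by
            rw [neg_le_neg_iff]
            gcongr
        _ = t ^ (-γ) * (-(ruAux γ t - 1)^2 / ruAux γ t) := by ring
        _ ≤ A t := mul_le_mul_of_nonneg_left step1 ha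
    · filter_upwards [h01] with t ht
      have ht0 : (0:ℝ) < t := ht.1
      have hU : 0 < ruAux γ t := ruAux_pos ht
      have ha : (0:ℝ) ≤ t ^ (-γ) := Real.rpow_nonneg ht0.le _
      have hlog : Real.log (ruAux γ t) - (ruAux γ t - 1) ≤ 0 :=
        sub_nonpos.2 (Real.log_le_sub_one_of_pos hU)
      have := mul_le_mul_of_nonneg_left hlog ha
      simpa [hA] using this
  have comb := (tA.add tB).const_mul (1/(1-γ))
  rw [add_zero, mul_zero] at comb
  apply comb.congr'
  filter_upwards [h01] with t ht
  simp only [hA, hB, ruAux]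
  field_simp
  ring

lemma FeqAux {γ : ℝ} (hγ1 : 1 < γ) {t : ℝ} (ht : t ∈ Set.Ioo (0:ℝ) 1) :
    (fun s : ℝ => renyiEntropy γ s - (γ / (γ - 1)) * s - s ^ γ / (1 - γ))
      =ᶠ[nhds t]
    (fun s : ℝ => (1/(1-γ)) * Real.log (ruAux γ s) - (γ/(γ-1)) * s - s ^ γ / (1-γ)) := by
  filter_upwards [isOpen_Ioo.mem_nhds ht] with s hs
  have hne : γ ≠ 1 := by intro h; rw [h] at hγ1; exact lt_irrefl 1 hγ1
  simp [renyiEntropy, hs, hne, ruAux]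

lemma derivFeqAux {γ : ℝ} (hγ1 : 1 < γ) {t : ℝ} (ht : t ∈ Set.Ioo (0:ℝ) 1) :
    deriv (fun s : ℝ => renyiEntropy γ s - (γ / (γ - 1)) * s - s ^ γ / (1 - γ)) t
      = rG1Aux γ t :=
  (FeqAux hγ1 ht).deriv_eq.trans (hasDerivAt_G0Aux hγ1 ht).deriv

/-- For `1 < γ < 2` and `F(t) = η_γ(t) − (γ/(γ−1))·t − t^γ/(1−γ)`, one has
`lim_{t→0⁺} t^{k−γ}·F^{(k)}(t) = 0` for `k = 0, 1, 2`. -/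
theorem renyiEntropy_eff_between_one_two {γ : ℝ} (hγ1 : 1 < γ) (hγ2 : γ < 2)
    (k : ℕ) (hk : k ≤ 2) :
    Filter.Tendsto
      (fun t : ℝ => t ^ ((k : ℝ) - γ)
        * iteratedDeriv k
            (fun s : ℝ => renyiEntropy γ s - (γ / (γ - 1)) * s - s ^ γ / (1 - γ)) t)
      (nhdsWithin 0 (Set.Ioi 0)) (nhds 0) := by
  have h01 : Set.Ioo (0:ℝ) 1 ∈ nhdsWithin (0:ℝ) (Set.Ioi 0) :=
    Ioo_mem_nhdsGT one_pos
  interval_cases k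
  · apply (tendsto0Aux hγ1 hγ2).congr'
    filter_upwards [h01] with t ht
    rw [iteratedDeriv_zero]
    have hne : γ ≠ 1 := by intro h; rw [h] at hγ1; exact lt_irrefl 1 hγ1
    have hF : renyiEntropy γ t = (1/(1-γ)) * Real.log (ruAux γ t) := by
      simp [renyiEntropy, ht, hne, ruAux]
    rw [hF]
    norm_num
  · apply (tendsto1Aux hγ1 hγ2).congr'
    filter_upwards [h01] with t ht
    rw [iteratedDeriv_one, derivFeqAux hγ1 ht]
    norm_num
  · apply (tendsto2Aux hγ1 hγ2).congr'
    filter_upwards [h01] with t ht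
    have hd2 : iteratedDeriv 2
        (fun s : ℝ => renyiEntropy γ s - (γ / (γ - 1)) * s - s ^ γ / (1 - γ)) t
        = rG2Aux γ t := by
      rw [show (2:ℕ) = 1 + 1 from rfl, iteratedDeriv_succ, iteratedDeriv_one]
      have hev : deriv (fun s : ℝ => renyiEntropy γ s - (γ / (γ - 1)) * s - s ^ γ / (1 - γ))
          =ᶠ[nhds t] rG1Aux γ := by
        filter_upwards [isOpen_Ioo.mem_nhds ht] with s hs
        exact derivFeqAux hγ1 hs
      exact hev.deriv_eq.trans (hasDerivAt_G1Aux hγ1 ht).deriv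
    rw [hd2]
    norm_num
end

section
/- Let d ≥ 1 and m ≥ 1 be integers, let h : ℝ^d → ℝ be continuous, and let h_∞ : ℝ^d → ℝ be continuous, positively homogeneous of degree 2m (h_∞(s·ξ) = s^{2m}·h_∞(ξ) for all s > 0 and ξ ∈ ℝ^d), satisfy min_{|ξ|=1} h_∞(ξ) > 0, and suppose |ξ|^{−2m}·|h(ξ) − h_∞(ξ)| → 0 as |ξ| → ∞. Set ϱ(T,μ) := (2π)^{−d}·∫_{ℝ^d} (1 + exp((h(ξ) − μ)/T))^{−1} dξ and κ := (2π)^{−d}·∫_{ℝ^d} exp(−h_∞(ξ)) dξ. Fix ρ > 0 and let μ : (0,∞) → ℝ be any function such that ϱ(T, μ(T)) → ρ as T → ∞. Then exp(−μ(T)/T) · κ · T^{d/(2m)} / ρ → 1 as T → ∞; equivalently, exp(−μ(T)/T) = (κ·T^{d/(2m)}/ρ)·(1 + o(1)) as T → ∞. -/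
open MeasureTheory Real Filter

section aux
variable {d m : ℕ}

lemma gauss_integrable {b : ℝ} (hb : 0 < b) :
    Integrable (fun v : EuclideanSpace ℝ (Fin d) => Real.exp (-b * ‖v‖^2)) := by
  have H := GaussianFourier.integrable_cexp_neg_mul_sq_norm_add (V := EuclideanSpace ℝ (Fin d))
    (b := (b:ℂ)) (by simpa using hb) 0 0
  refine H.norm.congr (Eventually.of_forall fun v => ?_)
  have : ((‖v‖:ℂ) ^ 2).re = ‖v‖^2 := by norm_cast
  simp [Complex.norm_exp, neg_mul, this]

lemma pow_integrable (hm : 1 ≤ m) {a : ℝ} (ha : 0 < a) :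
    Integrable (fun v : EuclideanSpace ℝ (Fin d) => Real.exp (-(a * ‖v‖^(2*m)))) := by
  refine (((gauss_integrable (d := d) ha).const_mul (Real.exp a)).mono'
    ?_ (Eventually.of_forall fun v => ?_))
  · exact (Real.continuous_exp.comp (by fun_prop)).aestronglyMeasurable
  · rw [Real.norm_of_nonneg (Real.exp_pos _).le, ← Real.exp_add]
    apply Real.exp_le_exp.2
    have h1 : ‖v‖^2 ≤ 1 + ‖v‖^(2*m) := by
      rcases le_total ‖v‖ 1 with hv | hv
      · have : ‖v‖^2 ≤ 1 := pow_le_one₀ (norm_nonneg _) hv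
        nlinarith [pow_nonneg (norm_nonneg v) (2*m)]
      · have : ‖v‖^2 ≤ ‖v‖^(2*m) := pow_le_pow_right₀ hv (by omega)
        linarith
    nlinarith

end aux

set_option maxHeartbeats 1000000 in
/-- Fixed-density high-temperature behavior of the chemical potential.
Let `h, h_∞ : ℝ^d → ℝ` be continuous (`d ≥ 1`), with `h_∞` positively homogeneous
of degree `2m` (`m ≥ 1`), `min_{|ξ|=1} h_∞(ξ) > 0`, and
`|ξ|^{−2m}·|h(ξ) − h_∞(ξ)| → 0` as `|ξ| → ∞`. Set
`ϱ(T,μ) = (2π)^{−d}·∫ (1 + exp((h(ξ)−μ)/T))⁻¹ dξ` and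
`κ = (2π)^{−d}·∫ exp(−h_∞(ξ)) dξ`. If `ρ > 0` and `μ : (0,∞) → ℝ` satisfies
`ϱ(T, μ(T)) → ρ` as `T → ∞`, then
`exp(−μ(T)/T) = (κ·T^{d/(2m)}/ρ)·(1 + o(1))`, i.e.
`exp(−μ(T)/T) / (κ·T^{d/(2m)}/ρ) → 1` as `T → ∞`. -/
theorem fugacity_asymptotics_fixed_density {d m : ℕ} (hd : 1 ≤ d) (hm : 1 ≤ m)
    (h hLim : EuclideanSpace ℝ (Fin d) → ℝ)
    (hcont : Continuous h) (hcontLim : Continuous hLim)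
    (hhom : ∀ s : ℝ, 0 < s → ∀ ξ : EuclideanSpace ℝ (Fin d),
      hLim (s • ξ) = s ^ (2 * m) * hLim ξ)
    (hpos : ∃ ν : ℝ, 0 < ν ∧ ∀ ξ : EuclideanSpace ℝ (Fin d), ‖ξ‖ = 1 → ν ≤ hLim ξ)
    (hasym : ∀ ε : ℝ, 0 < ε → ∃ R : ℝ, ∀ ξ : EuclideanSpace ℝ (Fin d),
      R ≤ ‖ξ‖ → |h ξ - hLim ξ| ≤ ε * ‖ξ‖ ^ (2 * m))
    (ρ : ℝ) (hρ : 0 < ρ) (μ : ℝ → ℝ)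
    (hμ : Filter.Tendsto
      (fun T : ℝ => ((2 * Real.pi) ^ d)⁻¹ *
        ∫ ξ : EuclideanSpace ℝ (Fin d), (1 + Real.exp ((h ξ - μ T) / T))⁻¹)
      Filter.atTop (nhds ρ)) :
    Filter.Tendsto
      (fun T : ℝ => Real.exp (-(μ T) / T) /
        ((((2 * Real.pi) ^ d)⁻¹ *
            ∫ ξ : EuclideanSpace ℝ (Fin d), Real.exp (-(hLim ξ)))
          * T ^ ((d : ℝ) / (2 * m)) / ρ))
      Filter.atTop (nhds 1) := by
  obtain ⟨ν, hν, hνle⟩ := hpos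
  haveI : Nontrivial (EuclideanSpace ℝ (Fin d)) :=
    Module.nontrivial_of_finrank_pos (R := ℝ)
      (by rw [finrank_euclideanSpace_fin]; omega)
  set P : ℝ := ((2 * Real.pi) ^ d)⁻¹ with hP
  have hPpos : 0 < P := by
    have : (0:ℝ) < 2 * Real.pi := by positivity
    positivity
  -- hLim vanishes at 0
  have hLim0 : hLim 0 = 0 := by
    have h2 := hhom 2 (by norm_num) 0
    rw [smul_zero] at h2
    have h3 : (1:ℝ) < 2 ^ (2*m) := one_lt_pow₀ (by norm_num) (by omega)
    nlinarith
  -- lower bound for hLim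
  have hlow : ∀ ξ : EuclideanSpace ℝ (Fin d), ν * ‖ξ‖^(2*m) ≤ hLim ξ := by
    intro ξ
    rcases eq_or_ne ξ 0 with rfl | hne
    · simp [hLim0, zero_pow (by omega : 2*m ≠ 0)]
    · have hn : 0 < ‖ξ‖ := norm_pos_iff.2 hne
      have hu : ‖(‖ξ‖⁻¹ • ξ)‖ = 1 := norm_smul_inv_norm hne
      have h1 := hhom ‖ξ‖ hn (‖ξ‖⁻¹ • ξ)
      rw [smul_smul, mul_inv_cancel₀ hn.ne', one_smul] at h1
      have h2 := hνle _ hu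
      have h3 : (0:ℝ) < ‖ξ‖^(2*m) := pow_pos hn _
      nlinarith
  -- lower bound for h : h ξ ≥ (ν/2)‖ξ‖^(2m) - C
  obtain ⟨R0, hR0⟩ := hasym (ν/2) (half_pos hν)
  set R : ℝ := max R0 1 with hRdef
  have hR1 : (1:ℝ) ≤ R := le_max_right _ _
  obtain ⟨ξmin, -, hξmin⟩ := (isCompact_closedBall (0:EuclideanSpace ℝ (Fin d)) R).exists_isMinOn
      ⟨0, by simp [Metric.mem_closedBall]; linarith⟩ hcont.continuousOn
  set C : ℝ := max 0 (-(h ξmin) + (ν/2)*R^(2*m)) with hCdef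
  have hC0 : 0 ≤ C := le_max_left _ _
  have hCle : ∀ ξ : EuclideanSpace ℝ (Fin d), (ν/2) * ‖ξ‖^(2*m) - C ≤ h ξ := by
    intro ξ
    rcases le_total ‖ξ‖ R with hle | hge
    · have h1 : h ξmin ≤ h ξ := hξmin (by simpa [Metric.mem_closedBall, dist_zero_right] using hle)
      have h2 : ‖ξ‖^(2*m) ≤ R^(2*m) := pow_le_pow_left₀ (norm_nonneg _) hle _
      have h3 : -(h ξmin) + (ν/2)*R^(2*m) ≤ C := le_max_right _ _
      nlinarith
    · have h1 := hR0 ξ (le_trans (le_max_left _ _) hge)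
      have h2 := hlow ξ
      have h3 := abs_le.1 h1
      nlinarith [pow_nonneg (norm_nonneg ξ) (2*m)]
  -- fugacity and scaling factor
  set z : ℝ → ℝ := fun T => Real.exp (μ T / T) with hzdef
  set c : ℝ → ℝ := fun T => T ^ ((1:ℝ)/(2*m)) with hcdef
  have hzpos : ∀ T, 0 < z T := fun T => Real.exp_pos _
  have hmR : (0:ℝ) < 2*(m:ℝ) := by
    have : (0:ℝ) < (m:ℝ) := by exact_mod_cast Nat.pos_of_ne_zero (by omega)
    linarith
  have hcpos : ∀ T : ℝ, 0 < T → 0 < c T := fun T hT => Real.rpow_pos_of_pos hT _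
  have hcpow : ∀ T : ℝ, 0 < T → (c T)^(2*m) = T := by
    intro T hT
    rw [hcdef, ← Real.rpow_natCast (T ^ ((1:ℝ)/(2*(m:ℝ)))) (2*m), ← Real.rpow_mul hT.le]
    push_cast
    rw [one_div, inv_mul_cancel₀ (ne_of_gt hmR), Real.rpow_one]
  have hcd : ∀ T : ℝ, 0 < T → (c T)^d = T ^ ((d:ℝ)/(2*(m:ℝ))) := by
    intro T hT
    rw [hcdef, ← Real.rpow_natCast (T ^ ((1:ℝ)/(2*(m:ℝ)))) d, ← Real.rpow_mul hT.le]
    congr 1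
    field_simp
  -- integrability of the Fermi integrand for each T > 0
  have hint : ∀ T : ℝ, 0 < T → Integrable
      (fun ξ : EuclideanSpace ℝ (Fin d) => (1 + Real.exp ((h ξ - μ T)/T))⁻¹) := by
    intro T hT
    have ha : 0 < ν/2/T := by positivity
    refine ((pow_integrable hm ha).const_mul (z T * Real.exp (C/T))).mono'
      ?_ (Eventually.of_forall fun ξ => ?_)
    · refine Continuous.aestronglyMeasurable (Continuous.inv₀
        (continuous_const.add (Real.continuous_exp.comp ((hcont.sub continuous_const).div_const T)))
        (fun ξ => ?_))
      positivity
    · rw [Real.norm_of_nonneg (by positivity)]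
      have step1 : (1 + Real.exp ((h ξ - μ T)/T))⁻¹ ≤ Real.exp (-((h ξ - μ T)/T)) := by
        rw [Real.exp_neg]
        exact inv_anti₀ (Real.exp_pos _) (by linarith [Real.exp_pos ((h ξ - μ T)/T)])
      refine step1.trans ?_
      rw [hzdef, mul_assoc, ← Real.exp_add, ← Real.exp_add]
      apply Real.exp_le_exp.2
      have h1 := hCle ξ
      rw [show -((h ξ - μ T)/T) = (μ T - h ξ)/T from by ring,
        show μ T / T + (C / T + -(ν / 2 / T * ‖ξ‖ ^ (2 * m)))
          = (μ T + C - ν/2*‖ξ‖^(2*m))/T from by field_simp; ring]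
      exact (div_le_div_iff_of_pos_right hT).2 (by linarith)
  -- change of variables identity
  have hid : ∀ T : ℝ, 0 < T →
      P * ∫ ξ : EuclideanSpace ℝ (Fin d), (1 + Real.exp ((h ξ - μ T)/T))⁻¹
        = z T * T ^ ((d:ℝ)/(2*(m:ℝ))) *
          (P * ∫ η : EuclideanSpace ℝ (Fin d), (z T + Real.exp (h (c T • η)/T))⁻¹) := by
    intro T hT
    have key : ∀ ξ : EuclideanSpace ℝ (Fin d),
        (1 + Real.exp ((h ξ - μ T)/T))⁻¹ = z T * (z T + Real.exp (h ξ/T))⁻¹ := by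
      intro ξ
      have e1 : Real.exp ((h ξ - μ T)/T) = Real.exp (h ξ/T) / z T := by
        rw [hzdef, ← Real.exp_sub, ← sub_div]
      rw [e1]
      have hz := hzpos T
      have he := Real.exp_pos (h ξ/T)
      field_simp
    have cov : ∫ ξ : EuclideanSpace ℝ (Fin d), (z T + Real.exp (h ξ/T))⁻¹
        = (c T)^d * ∫ η : EuclideanSpace ℝ (Fin d), (z T + Real.exp (h (c T • η)/T))⁻¹ := by
      have hcs := MeasureTheory.Measure.integral_comp_smul_of_nonneg (μ := volume)
        (fun ξ : EuclideanSpace ℝ (Fin d) => (z T + Real.exp (h ξ/T))⁻¹) (c T)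
        (hR := (hcpos T hT).le)
      rw [finrank_euclideanSpace_fin] at hcs
      rw [hcs, smul_eq_mul, ← mul_assoc, mul_inv_cancel₀ (pow_ne_zero _ (hcpos T hT).ne'),
        one_mul]
    calc P * ∫ ξ : EuclideanSpace ℝ (Fin d), (1 + Real.exp ((h ξ - μ T)/T))⁻¹
        = P * ∫ ξ : EuclideanSpace ℝ (Fin d), z T * (z T + Real.exp (h ξ/T))⁻¹ := by
          simp_rw [key]
      _ = P * (z T * ∫ ξ : EuclideanSpace ℝ (Fin d), (z T + Real.exp (h ξ/T))⁻¹) := by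
          rw [MeasureTheory.integral_const_mul]
      _ = z T * T ^ ((d:ℝ)/(2*(m:ℝ))) *
          (P * ∫ η : EuclideanSpace ℝ (Fin d), (z T + Real.exp (h (c T • η)/T))⁻¹) := by
          rw [cov, ← hcd T hT]; ring
  -- the fugacity tends to 0
  have hz0 : Tendsto z atTop (nhds 0) := by
    refine tendsto_order.2 ⟨fun a ha => Eventually.of_forall fun T => ha.trans_le (hzpos T).le,
      fun δ hδ => ?_⟩
    by_contra hcon
    rw [not_eventually] at hcon
    have hv1pos : 0 < (volume (Metric.ball (0:EuclideanSpace ℝ (Fin d)) 1)).toReal := by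
      refine ENNReal.toReal_pos (ne_of_gt (Metric.measure_ball_pos volume 0 one_pos))
        measure_ball_lt_top.ne
    set v1 : ℝ := (volume (Metric.ball (0:EuclideanSpace ℝ (Fin d)) 1)).toReal with hv1def
    set cδ : ℝ := (1 + Real.exp 1 / δ)⁻¹ with hcδdef
    have hcδpos : 0 < cδ := by positivity
    set r : ℝ := max 1 ((ρ + 1)/(P * cδ * v1)) with hrdef
    have hr1 : (1:ℝ) ≤ r := le_max_left _ _
    have hrpos : (0:ℝ) < r := lt_of_lt_of_le one_pos hr1
    have hrd : (ρ + 1) ≤ P * cδ * (r^d * v1) := by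
      have h1 : (ρ + 1)/(P * cδ * v1) ≤ r := le_max_right _ _
      have h2 : r ≤ r^d := le_self_pow₀ hr1 (by omega)
      rw [div_le_iff₀ (by positivity)] at h1
      nlinarith
    have hvolr : (volume (Metric.ball (0:EuclideanSpace ℝ (Fin d)) r)).toReal = r^d * v1 := by
      rw [MeasureTheory.Measure.addHaar_ball volume 0 hrpos.le, finrank_euclideanSpace_fin,
        ENNReal.toReal_mul, ENNReal.toReal_ofReal (by positivity)]
    obtain ⟨ξmax, -, hξmax⟩ := (isCompact_closedBall (0:EuclideanSpace ℝ (Fin d)) r).exists_isMaxOn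
      ⟨0, by simp [Metric.mem_closedBall]; linarith⟩ hcont.continuousOn
    set T0 : ℝ := max 1 |h ξmax| with hT0def
    have hev : ∀ᶠ T in atTop, T0 ≤ T ∧
        (P * ∫ ξ : EuclideanSpace ℝ (Fin d), (1 + Real.exp ((h ξ - μ T)/T))⁻¹) < ρ + 1 :=
      (eventually_ge_atTop T0).and (hμ.eventually_lt_const (by linarith))
    obtain ⟨T, hnot, hT0le, hFlt⟩ := (hcon.and_eventually hev).exists
    have hTpos : 0 < T := lt_of_lt_of_le one_pos ((le_max_left _ _).trans hT0le)
    have hδle : δ ≤ z T := not_lt.1 hnot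
    have hbd : ∀ ξ ∈ Metric.closedBall (0:EuclideanSpace ℝ (Fin d)) r,
        cδ ≤ (1 + Real.exp ((h ξ - μ T)/T))⁻¹ := by
      intro ξ hξ
      have hhle : h ξ ≤ T := ((hξmax hξ).trans ((le_abs_self _).trans
        ((le_max_right 1 _).trans hT0le)))
      have e1 : Real.exp ((h ξ - μ T)/T) = Real.exp (h ξ/T) / z T := by
        rw [hzdef, ← Real.exp_sub, ← sub_div]
      have e2 : Real.exp (h ξ/T) ≤ Real.exp 1 :=
        Real.exp_le_exp.2 ((div_le_one hTpos).2 hhle)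
      have e3 : Real.exp (h ξ/T) / z T ≤ Real.exp 1 / δ :=
        div_le_div₀ (Real.exp_pos 1).le e2 hδ hδle
      rw [hcδdef]
      exact inv_anti₀ (by positivity) (by rw [e1]; linarith)
    have hlow2 : cδ * (volume (Metric.closedBall (0:EuclideanSpace ℝ (Fin d)) r)).toReal
        ≤ ∫ ξ : EuclideanSpace ℝ (Fin d), (1 + Real.exp ((h ξ - μ T)/T))⁻¹ := by
      have hsi := MeasureTheory.setIntegral_ge_of_const_le measurableSet_closedBall
        measure_closedBall_lt_top.ne hbd ((hint T hTpos).integrableOn)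
      rw [smul_eq_mul, mul_comm, MeasureTheory.measureReal_def] at hsi
      refine le_trans hsi ?_
      exact MeasureTheory.setIntegral_le_integral (hint T hTpos)
        (Eventually.of_forall fun ξ => by positivity)
    have hmono : r^d * v1 ≤ (volume (Metric.closedBall (0:EuclideanSpace ℝ (Fin d)) r)).toReal := by
      rw [← hvolr]
      exact ENNReal.toReal_mono measure_closedBall_lt_top.ne
        (measure_mono Metric.ball_subset_closedBall)
    have : ρ + 1 ≤ P * ∫ ξ : EuclideanSpace ℝ (Fin d), (1 + Real.exp ((h ξ - μ T)/T))⁻¹ := by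
      calc ρ + 1 ≤ P * cδ * (r^d * v1) := hrd
        _ ≤ P * (cδ * (volume (Metric.closedBall (0:EuclideanSpace ℝ (Fin d)) r)).toReal) := by
            rw [mul_assoc]
            exact mul_le_mul_of_nonneg_left (mul_le_mul_of_nonneg_left hmono hcδpos.le) hPpos.le
        _ ≤ _ := mul_le_mul_of_nonneg_left hlow2 hPpos.le
    linarith
  -- pointwise limit of the scaled symbol
  have hglim : ∀ η : EuclideanSpace ℝ (Fin d),
      Tendsto (fun T => h (c T • η) / T) atTop (nhds (hLim η)) := by
    intro η
    rcases eq_or_ne η 0 with rfl | hne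
    · simp only [smul_zero, hLim0]
      exact Tendsto.div_atTop tendsto_const_nhds tendsto_id
    · refine Metric.tendsto_nhds.2 fun ε hε => ?_
      have hnorm : 0 < ‖η‖ := norm_pos_iff.2 hne
      have hnp : 0 < ‖η‖^(2*m) := pow_pos hnorm _
      obtain ⟨Rε, hRε⟩ := hasym (ε/2/‖η‖^(2*m)) (by positivity)
      have hcT : Tendsto c atTop atTop := by
        rw [hcdef]
        exact tendsto_rpow_atTop (by positivity)
      filter_upwards [hcT.eventually_ge_atTop (Rε/‖η‖), eventually_gt_atTop (0:ℝ)]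
        with T hcge hTpos
      have hnormc : ‖c T • η‖ = c T * ‖η‖ := by
        rw [norm_smul, Real.norm_of_nonneg (hcpos T hTpos).le]
      have hRle : Rε ≤ ‖c T • η‖ := by
        rw [hnormc]
        rw [div_le_iff₀ hnorm] at hcge
        linarith
      have hb := hRε _ hRle
      have hhomc : hLim (c T • η) = T * hLim η := by
        rw [hhom (c T) (hcpos T hTpos) η, hcpow T hTpos]
      rw [hnormc, mul_pow, hcpow T hTpos] at hb
      have hb2 : |h (c T • η) - hLim (c T • η)| ≤ ε/2 * T := by
        refine hb.trans (le_of_eq ?_)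
        field_simp
      rw [Real.dist_eq,
        show h (c T • η)/T - hLim η = (h (c T • η) - hLim (c T • η))/T from by
          rw [hhomc]; field_simp,
        abs_div, abs_of_pos hTpos]
      calc |h (c T • η) - hLim (c T • η)|/T ≤ (ε/2*T)/T := by
            exact (div_le_div_iff_of_pos_right hTpos).2 hb2
        _ = ε/2 := by field_simp
        _ < ε := by linarith
  -- dominated convergence
  have hGlim : Tendsto (fun T => ∫ η : EuclideanSpace ℝ (Fin d),
      (z T + Real.exp (h (c T • η)/T))⁻¹) atTop
      (nhds (∫ η : EuclideanSpace ℝ (Fin d), Real.exp (-(hLim η)))) := by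
    refine MeasureTheory.tendsto_integral_filter_of_dominated_convergence
      (fun η => Real.exp C * Real.exp (-(ν/2 * ‖η‖^(2*m)))) ?_ ?_ ?_ ?_
    · filter_upwards [eventually_gt_atTop (0:ℝ)] with T hT
      refine Continuous.aestronglyMeasurable (Continuous.inv₀
        (continuous_const.add (Real.continuous_exp.comp
          ((hcont.comp (continuous_id.const_smul (c T))).div_const T))) fun η => ?_)
      have := hzpos T
      positivity
    · filter_upwards [eventually_ge_atTop (1:ℝ)] with T hT1
      refine Eventually.of_forall fun η => ?_
      have hT : (0:ℝ) < T := lt_of_lt_of_le one_pos hT1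
      have hg : ν/2 * ‖η‖^(2*m) - C ≤ h (c T • η)/T := by
        have h1 := hCle (c T • η)
        rw [norm_smul, Real.norm_of_nonneg (hcpos T hT).le, mul_pow, hcpow T hT] at h1
        rw [le_div_iff₀ hT]
        nlinarith [pow_nonneg (norm_nonneg η) (2*m)]
      have hz := hzpos T
      rw [Real.norm_of_nonneg (by positivity)]
      have s1 : (z T + Real.exp (h (c T • η)/T))⁻¹ ≤ Real.exp (-(h (c T • η)/T)) := by
        rw [Real.exp_neg]
        exact inv_anti₀ (Real.exp_pos _) (by linarith)
      refine s1.trans ?_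
      rw [← Real.exp_add]
      exact Real.exp_le_exp.2 (by linarith)
    · exact (pow_integrable hm (half_pos hν)).const_mul _
    · refine Eventually.of_forall fun η => ?_
      have h1 : Tendsto (fun T => z T + Real.exp (h (c T • η)/T)) atTop
          (nhds (0 + Real.exp (hLim η))) :=
        hz0.add ((Real.continuous_exp.tendsto _).comp (hglim η))
      have h2 := h1.inv₀ (by positivity : (0:ℝ) + Real.exp (hLim η) ≠ 0)
      rw [zero_add, ← Real.exp_neg] at h2
      exact h2
  -- positivity of κ
  set κ : ℝ := P * ∫ η : EuclideanSpace ℝ (Fin d), Real.exp (-(hLim η)) with hκdef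
  have hIκ : Integrable (fun η : EuclideanSpace ℝ (Fin d) => Real.exp (-(hLim η))) := by
    refine (pow_integrable hm hν).mono'
      ((Real.continuous_exp.comp hcontLim.neg).aestronglyMeasurable)
      (Eventually.of_forall fun η => ?_)
    rw [Real.norm_of_nonneg (Real.exp_pos _).le]
    exact Real.exp_le_exp.2 (by linarith [hlow η])
  have hκint_pos : 0 < ∫ η : EuclideanSpace ℝ (Fin d), Real.exp (-(hLim η)) := by
    rw [MeasureTheory.integral_pos_iff_support_of_nonneg
      (fun η => (Real.exp_pos _).le) hIκ]
    have hsupp : (Function.support fun η : EuclideanSpace ℝ (Fin d) =>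
        Real.exp (-(hLim η))) = Set.univ := by
      ext η
      simp [Function.mem_support, (Real.exp_pos (-(hLim η))).ne']
    rw [hsupp]
    exact lt_of_lt_of_le (Metric.measure_ball_pos volume 0 one_pos)
      (measure_mono (Set.subset_univ _))
  have hκpos : 0 < κ := mul_pos hPpos hκint_pos
  -- combine
  have hFG : Tendsto (fun T => z T * T ^ ((d:ℝ)/(2*(m:ℝ))) *
      (P * ∫ η : EuclideanSpace ℝ (Fin d), (z T + Real.exp (h (c T • η)/T))⁻¹))
      atTop (nhds ρ) := by
    refine hμ.congr' ?_
    filter_upwards [eventually_gt_atTop (0:ℝ)] with T hT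
    exact hid T hT
  have hGv : Tendsto (fun T => P * ∫ η : EuclideanSpace ℝ (Fin d),
      (z T + Real.exp (h (c T • η)/T))⁻¹) atTop (nhds κ) := hGlim.const_mul P
  have hzT : Tendsto (fun T => z T * T ^ ((d:ℝ)/(2*(m:ℝ)))) atTop (nhds (ρ/κ)) := by
    refine (hFG.div hGv hκpos.ne').congr' ?_
    filter_upwards [hGv.eventually_ne hκpos.ne'] with T hne
    simp only [Pi.div_apply]
    rw [mul_div_assoc, div_self hne, mul_one]
  have hfin : Tendsto (fun T => ρ / (κ * (z T * T ^ ((d:ℝ)/(2*(m:ℝ)))))) atTop (nhds 1) := by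
    have h1 := tendsto_const_nhds (α := ℝ) (x := ρ) (f := atTop) |>.div
      ((tendsto_const_nhds (x := κ)).mul hzT)
      (by rw [show κ * (ρ/κ) = ρ from by rw [mul_comm, div_mul_cancel₀ _ hκpos.ne']]; exact hρ.ne')
    have h2 : ρ / (κ * (ρ/κ)) = 1 := by
      rw [mul_comm, div_mul_cancel₀ _ hκpos.ne', div_self hρ.ne']
    rwa [h2] at h1
  refine hfin.congr' ?_
  filter_upwards [eventually_gt_atTop (0:ℝ)] with T hT
  have hTpow : 0 < T ^ ((d:ℝ)/(2*(m:ℝ))) := Real.rpow_pos_of_pos hT _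
  have hexp : Real.exp (-(μ T) / T) = (z T)⁻¹ := by
    rw [hzdef, neg_div, Real.exp_neg]
  rw [hexp]
  have hz := hzpos T
  rw [div_eq_div_iff (by positivity) (by positivity)]
  field_simp
end
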